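/- arXiv:1309.5324 — 4 statements merged into one kernel-verified Lean document; each statement's English description precedes it below -/
import Mathlib

section
/- Asymptotics of the Casimirs (Proposition 8.1): For every R > 0 there exists C > 0 such that for all C², 1-periodic functions α, β : ℝ → ℝ with ∫₀¹ α = ∫₀¹ β = 0 and ‖α‖_{C²} ≤ R, ‖β‖_{C²} ≤ R, and for every integer N ≥ 1: |∏_{n=1}^{N} (1 + (2N)^{−2} α(n/N)) − 1| ≤ C N^{−3} and |(2N)^{−2} ∑_{n=1}^{N} β(n/N)| ≤ C N^{−3}. -/
open intervalIntegral MeasureTheory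

lemma cd2_facts (f : ℝ → ℝ) (hf : ContDiff ℝ 2 f) :
    Differentiable ℝ f ∧ Differentiable ℝ (deriv f) ∧ Continuous (deriv (deriv f)) := by
  have h2 : ContDiff ℝ ((1 : WithTop ℕ∞) + 1) f := by
    exact hf
  rw [contDiff_succ_iff_deriv] at h2
  have h1 := contDiff_one_iff_deriv.mp h2.2.2
  exact ⟨h2.1, h1.1, h1.2⟩

lemma key_interval (f : ℝ → ℝ) (hf : ContDiff ℝ 2 f) (R : ℝ)
    (hbd : ∀ x, |deriv (deriv f) x| ≤ R) (a b : ℝ) (hab : a ≤ b) :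
    |f b * (b - a) - (∫ x in a..b, f x) - (b - a) / 2 * (f b - f a)|
      ≤ R * (b - a) ^ 3 / 8 := by
  obtain ⟨hd0, hd1, hc2⟩ := cd2_facts f hf
  have hc0 : Continuous f := hd0.continuous
  have hc1 : Continuous (deriv f) := hd1.continuous
  -- IBP 1 : ∫ (t-a) f' = (b-a) f b - ∫ f
  have ibp1 : (∫ t in a..b, (t - a) * deriv f t)
      = (b - a) * f b - ∫ t in a..b, f t := by
    have h := integral_mul_deriv_eq_deriv_mul
      (u := fun t => t - a) (u' := fun _ => (1 : ℝ)) (v := f) (v' := deriv f)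
      (fun x _ => (hasDerivAt_id x).sub_const a)
      (fun x _ => (hd0 x).hasDerivAt)
      (intervalIntegrable_const) (hc1.intervalIntegrable a b)
    simp only [sub_self, zero_mul, one_mul] at h
    rw [h]; ring_nf
  -- FTC : ∫ f' = f b - f a
  have ftc : (∫ t in a..b, deriv f t) = f b - f a :=
    integral_deriv_eq_sub (fun x _ => hd0 x) (hc1.intervalIntegrable a b)
  -- IBP 2
  set G : ℝ → ℝ := fun t => (t - a) * (t - b) / 2 with hG
  have hGd : ∀ t : ℝ, HasDerivAt G (t - (a + b) / 2) t := by
    intro t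
    have h := (((hasDerivAt_id t).sub_const a).mul ((hasDerivAt_id t).sub_const b)).div_const 2
    exact h.congr_deriv (by simp only [id_eq]; ring)
  have ibp2 : (∫ t in a..b, deriv f t * (t - (a + b) / 2))
      = - ∫ t in a..b, deriv (deriv f) t * G t := by
    have h := integral_mul_deriv_eq_deriv_mul
      (u := deriv f) (u' := deriv (deriv f)) (v := G) (v' := fun t => t - (a + b) / 2)
      (fun x _ => (hd1 x).hasDerivAt)
      (fun x _ => hGd x)
      (hc2.intervalIntegrable a b)
      (by apply Continuous.intervalIntegrable; continuity)
    rw [h]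
    simp [hG]
  -- combine
  have comb : f b * (b - a) - (∫ x in a..b, f x) - (b - a) / 2 * (f b - f a)
      = - ∫ t in a..b, deriv (deriv f) t * G t := by
    rw [← ibp2, ← ftc]
    have : (∫ t in a..b, deriv f t * (t - (a + b) / 2))
        = (∫ t in a..b, (t - a) * deriv f t) - (b - a) / 2 * ∫ t in a..b, deriv f t := by
      rw [← intervalIntegral.integral_const_mul, ← intervalIntegral.integral_sub
        (by apply Continuous.intervalIntegrable; continuity)
        (by apply Continuous.intervalIntegrable; continuity)]
      congr 1; ext t; ring
    rw [this, ibp1]; ring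
  rw [comb, abs_neg]
  have hR : 0 ≤ R := le_trans (abs_nonneg _) (hbd a)
  have hb : ∀ t ∈ Set.uIoc a b, ‖deriv (deriv f) t * G t‖ ≤ R * (b - a) ^ 2 / 8 := by
    intro t ht
    rw [Set.uIoc_of_le hab] at ht
    have h1 : |G t| ≤ (b - a) ^ 2 / 8 := by
      rw [hG]; simp only [abs_div, abs_mul]
      rw [abs_of_nonneg (by linarith [ht.1] : (0:ℝ) ≤ t - a),
        abs_of_nonpos (by linarith [ht.2] : t - b ≤ 0),
        show |(2:ℝ)| = 2 by norm_num]
      nlinarith [sq_nonneg (t - (a + b) / 2), ht.1, ht.2]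
    calc ‖deriv (deriv f) t * G t‖ = |deriv (deriv f) t| * |G t| := abs_mul _ _
      _ ≤ R * ((b - a) ^ 2 / 8) := by
          apply mul_le_mul (hbd t) h1 (abs_nonneg _) hR
      _ = R * (b - a) ^ 2 / 8 := by ring
  have := intervalIntegral.norm_integral_le_of_norm_le_const hb
  rw [abs_of_nonneg (by linarith : (0:ℝ) ≤ b - a)] at this
  calc |∫ t in a..b, deriv (deriv f) t * G t| ≤ R * (b - a) ^ 2 / 8 * (b - a) := this
    _ = R * (b - a) ^ 3 / 8 := by ring

lemma sum_bound (f : ℝ → ℝ) (hf : ContDiff ℝ 2 f) (hper : Function.Periodic f 1)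
    (hint : (∫ x in (0:ℝ)..1, f x) = 0) (R : ℝ)
    (hbd : ∀ x, |deriv (deriv f) x| ≤ R)
    (N : ℕ) (hN : 1 ≤ N) :
    |∑ n ∈ Finset.Icc 1 N, f ((n : ℝ) / N)| ≤ R / N := by
  obtain ⟨hd0, hd1, hc2⟩ := cd2_facts f hf
  have hR : 0 ≤ R := le_trans (abs_nonneg _) (hbd 0)
  have hN0 : (0:ℝ) < N := by exact_mod_cast hN
  set a : ℕ → ℝ := fun k => (k : ℝ) / N with ha
  have hstep : ∀ k : ℕ, a (k + 1) - a k = 1 / N := by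
    intro k; simp only [ha]; push_cast; field_simp; ring
  have hmono : ∀ k, a k ≤ a (k + 1) := by
    intro k
    have := hstep k
    have h1 : (0:ℝ) < 1 / N := by positivity
    linarith
  have key : ∀ k, |f (a (k + 1)) * (1 / N) - (∫ x in a k..a (k + 1), f x)
      - (1 / N) / 2 * (f (a (k + 1)) - f (a k))| ≤ R * (1 / N) ^ 3 / 8 := by
    intro k
    have h := key_interval f hf R hbd (a k) (a (k + 1)) (hmono k)
    rwa [hstep k] at h
  have hint_sum : (∑ k ∈ Finset.range N, ∫ x in a k..a (k + 1), f x) = 0 := by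
    rw [intervalIntegral.sum_integral_adjacent_intervals
      (fun k _ => hd0.continuous.intervalIntegrable _ _)]
    have h0 : a 0 = 0 := by simp [ha]
    have h1 : a N = 1 := by simp only [ha]; exact div_self hN0.ne'
    rw [h0, h1, hint]
  have htel : (∑ k ∈ Finset.range N, (f (a (k + 1)) - f (a k))) = 0 := by
    rw [Finset.sum_range_sub (fun k => f (a k))]
    have h0 : a 0 = 0 := by simp [ha]
    have h1 : a N = 1 := by simp only [ha]; exact div_self hN0.ne'
    rw [h0, h1]
    have hp := hper 0
    rw [zero_add] at hp
    rw [hp, sub_self]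
  have main : |∑ k ∈ Finset.range N, f (a (k + 1)) * (1 / N)| ≤ N * (R * (1 / N) ^ 3 / 8) := by
    have heq : (∑ k ∈ Finset.range N, f (a (k + 1)) * (1 / N))
        = ∑ k ∈ Finset.range N, (f (a (k + 1)) * (1 / N) - (∫ x in a k..a (k + 1), f x)
            - (1 / N) / 2 * (f (a (k + 1)) - f (a k))) := by
      rw [Finset.sum_sub_distrib, Finset.sum_sub_distrib, hint_sum, ← Finset.mul_sum, htel]
      ring
    rw [heq]
    calc |∑ k ∈ Finset.range N, (f (a (k + 1)) * (1 / N) - (∫ x in a k..a (k + 1), f x)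
            - (1 / N) / 2 * (f (a (k + 1)) - f (a k)))|
        ≤ ∑ k ∈ Finset.range N, |f (a (k + 1)) * (1 / N) - (∫ x in a k..a (k + 1), f x)
            - (1 / N) / 2 * (f (a (k + 1)) - f (a k))| := Finset.abs_sum_le_sum_abs _ _
      _ ≤ ∑ _k ∈ Finset.range N, R * (1 / N) ^ 3 / 8 :=
          Finset.sum_le_sum (fun k _ => key k)
      _ = N * (R * (1 / N) ^ 3 / 8) := by
          rw [Finset.sum_const, Finset.card_range, nsmul_eq_mul]
  have reindex : (∑ n ∈ Finset.Icc 1 N, f ((n : ℝ) / N))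
      = ∑ k ∈ Finset.range N, f (a (k + 1)) := by
    rw [show Finset.Icc 1 N = Finset.Ico 1 (N + 1) by ext x; simp only [Finset.mem_Icc, Finset.mem_Ico]; omega,
      Finset.sum_Ico_eq_sum_range]
    simp only [Nat.add_sub_cancel]
    apply Finset.sum_congr rfl
    intro i _
    congr 1
    simp only [ha]
    push_cast
    ring
  have hfin : |∑ k ∈ Finset.range N, f (a (k + 1))| * (1 / N) ≤ N * (R * (1 / N) ^ 3 / 8) := by
    have : (∑ k ∈ Finset.range N, f (a (k + 1))) * (1 / N)
        = ∑ k ∈ Finset.range N, f (a (k + 1)) * (1 / N) := by rw [Finset.sum_mul]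
    calc |∑ k ∈ Finset.range N, f (a (k + 1))| * (1 / N)
        = |(∑ k ∈ Finset.range N, f (a (k + 1))) * (1 / N)| := by
          rw [abs_mul, abs_of_pos (by positivity : (0:ℝ) < 1 / N)]
      _ = |∑ k ∈ Finset.range N, f (a (k + 1)) * (1 / N)| := by rw [this]
      _ ≤ N * (R * (1 / N) ^ 3 / 8) := main
  rw [reindex]
  have h2 : (N:ℝ) * (R * (1 / N) ^ 3 / 8) = R / (8 * N) * (1 / N) := by
    field_simp
  rw [h2] at hfin
  have h3 : |∑ k ∈ Finset.range N, f (a (k + 1))| ≤ R / (8 * N) :=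
    le_of_mul_le_mul_right (by simpa [mul_comm] using hfin) (by positivity : (0:ℝ) < 1 / N)
  calc |∑ k ∈ Finset.range N, f (a (k + 1))| ≤ R / (8 * N) := h3
    _ ≤ R / N := by gcongr; linarith

lemma log_est {y : ℝ} (h : |y| ≤ 1 / 2) : |Real.log (1 + y) - y| ≤ 2 * y ^ 2 := by
  have h1 : |(-y)| < 1 := by rw [abs_neg]; linarith
  have h2 := Real.abs_log_sub_add_sum_range_le h1 1
  simp only [Finset.sum_range_one, pow_one, Nat.cast_zero, zero_add, div_one, sub_neg_eq_add,
    abs_neg] at h2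
  have h3 : |Real.log (1 + y) - y| = |-y + Real.log (1 + y)| := by
    congr 1; ring
  rw [h3]
  calc |-y + Real.log (1 + y)| ≤ |y| ^ (1 + 1) / (1 - |y|) := h2
    _ ≤ 2 * y ^ 2 := by
        rw [show (1 + 1 : ℕ) = 2 from rfl, sq_abs]
        have hy : 0 ≤ y ^ 2 := sq_nonneg y
        have : (1:ℝ) / 2 ≤ 1 - |y| := by linarith
        rw [div_le_iff₀ (by linarith)]
        nlinarith [abs_nonneg y]

/-- Proposition 8.1: asymptotics of the Casimirs `q_N` and `p_N`. -/
theorem casimir_asymptotics (R : ℝ) (hR : 0 < R) :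
    ∃ C : ℝ, 0 < C ∧
      ∀ α β : ℝ → ℝ,
        ContDiff ℝ 2 α → Function.Periodic α 1 → (∫ x in (0:ℝ)..1, α x) = 0 →
        ContDiff ℝ 2 β → Function.Periodic β 1 → (∫ x in (0:ℝ)..1, β x) = 0 →
        (∀ x, |α x| + |deriv α x| + |deriv (deriv α) x| ≤ R) →
        (∀ x, |β x| + |deriv β x| + |deriv (deriv β) x| ≤ R) →
        ∀ N : ℕ, 1 ≤ N →
          |(∏ n ∈ Finset.Icc 1 N, (1 + α ((n : ℝ) / N) / (4 * (N : ℝ) ^ 2))) - 1|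
              ≤ C / (N : ℝ) ^ 3 ∧
          |(∑ n ∈ Finset.Icc 1 N, β ((n : ℝ) / N)) / (4 * (N : ℝ) ^ 2)|
              ≤ C / (N : ℝ) ^ 3 := by
  set K : ℝ := R / 4 + R ^ 2 / 8 with hKdef
  have hK0 : 0 < K := by positivity
  set N₀ : ℕ := ⌈R⌉₊ + ⌈K⌉₊ + 2 with hN₀def
  have h1R : (0:ℝ) < 1 + R := by linarith
  set C : ℝ := (N₀ : ℝ) ^ 3 * ((1 + R) ^ N₀ + 2) + 2 * K + R with hCdef
  have hN₀pos : (0:ℝ) < N₀ := by positivity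
  have hC0 : 0 < C := by positivity
  refine ⟨C, hC0, ?_⟩
  intro α β hα hαper hαint hβ hβper hβint hαbd hβbd N hN
  have hN0 : (0:ℝ) < N := by exact_mod_cast hN
  have hN1 : (1:ℝ) ≤ N := by exact_mod_cast hN
  have hN3 : (0:ℝ) < (N:ℝ) ^ 3 := by positivity
  have hα2 : ∀ x, |deriv (deriv α) x| ≤ R := fun x => by
    have h := hαbd x
    have := abs_nonneg (α x); have := abs_nonneg (deriv α x); linarith
  have hβ2 : ∀ x, |deriv (deriv β) x| ≤ R := fun x => by
    have h := hβbd x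
    have := abs_nonneg (β x); have := abs_nonneg (deriv β x); linarith
  have hα0 : ∀ x, |α x| ≤ R := fun x => by
    have h := hαbd x
    have := abs_nonneg (deriv (deriv α) x); have := abs_nonneg (deriv α x); linarith
  have hsumα := sum_bound α hα hαper hαint R hα2 N hN
  have hsumβ := sum_bound β hβ hβper hβint R hβ2 N hN
  have hRC : R ≤ C := by
    have h1 : (0:ℝ) ≤ (N₀ : ℝ) ^ 3 * ((1 + R) ^ N₀ + 2) := by positivity
    rw [hCdef]; linarith
  constructor
  · -- product bound
    set x : ℕ → ℝ := fun n => α ((n : ℝ) / N) / (4 * (N : ℝ) ^ 2) with hxdef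
    have hxbR : ∀ n, |x n| ≤ R / (4 * (N:ℝ) ^ 2) := by
      intro n
      rw [hxdef]
      simp only []
      rw [abs_div, abs_of_pos (show (0:ℝ) < 4 * (N:ℝ) ^ 2 by positivity)]
      gcongr
      exact hα0 _
    by_cases hcase : N₀ ≤ N
    · -- large N
      have hcast : (N₀ : ℝ) ≤ N := by exact_mod_cast hcase
      have hRN : R ≤ (N : ℝ) := by
        have := Nat.le_ceil R
        have h2 : ((⌈R⌉₊ : ℕ) : ℝ) ≤ (N₀ : ℝ) := by exact_mod_cast (by omega : ⌈R⌉₊ ≤ N₀)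
        linarith
      have hKN : K ≤ (N : ℝ) := by
        have := Nat.le_ceil K
        have h2 : ((⌈K⌉₊ : ℕ) : ℝ) ≤ (N₀ : ℝ) := by exact_mod_cast (by omega : ⌈K⌉₊ ≤ N₀)
        linarith
      have hxb : ∀ n, |x n| ≤ 1 / (4 * (N:ℝ)) := by
        intro n
        refine (hxbR n).trans ?_
        rw [div_le_div_iff₀ (by positivity) (by positivity)]
        nlinarith
      have hxhalf : ∀ n, |x n| ≤ 1 / 2 := by
        intro n
        refine (hxb n).trans ?_
        rw [div_le_div_iff₀ (by positivity) (by norm_num)]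
        linarith
      have hpos : ∀ n, (0:ℝ) < 1 + x n := by
        intro n
        have := abs_le.mp (hxhalf n)
        linarith [this.1]
      have hprod : (∏ n ∈ Finset.Icc 1 N, (1 + x n))
          = Real.exp (∑ n ∈ Finset.Icc 1 N, Real.log (1 + x n)) := by
        rw [Real.exp_sum]
        exact Finset.prod_congr rfl (fun n _ => (Real.exp_log (hpos n)).symm)
      set T := ∑ n ∈ Finset.Icc 1 N, Real.log (1 + x n) with hTdef
      have hS : |∑ n ∈ Finset.Icc 1 N, x n| ≤ R / (4 * (N:ℝ) ^ 3) := by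
        have heq : (∑ n ∈ Finset.Icc 1 N, x n)
            = (∑ n ∈ Finset.Icc 1 N, α ((n : ℝ) / N)) / (4 * (N:ℝ) ^ 2) := by
          rw [Finset.sum_div]
        rw [heq, abs_div, abs_of_pos (show (0:ℝ) < 4 * (N:ℝ) ^ 2 by positivity)]
        calc |∑ n ∈ Finset.Icc 1 N, α ((n : ℝ) / N)| / (4 * (N:ℝ) ^ 2)
            ≤ (R / N) / (4 * (N:ℝ) ^ 2) := by
              apply div_le_div_of_nonneg_right ?_ (by positivity)
              exact hsumα
          _ = R / (4 * (N:ℝ) ^ 3) := by rw [div_div]; congr 1; ring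
      have hTS : |T - ∑ n ∈ Finset.Icc 1 N, x n| ≤ R ^ 2 / (8 * (N:ℝ) ^ 3) := by
        rw [hTdef, ← Finset.sum_sub_distrib]
        refine (Finset.abs_sum_le_sum_abs _ _).trans ?_
        have hterm : ∀ n ∈ Finset.Icc 1 N, |Real.log (1 + x n) - x n|
            ≤ 2 * (R / (4 * (N:ℝ) ^ 2)) ^ 2 := by
          intro n _
          refine (log_est (hxhalf n)).trans ?_
          have : (x n) ^ 2 ≤ (R / (4 * (N:ℝ) ^ 2)) ^ 2 := by
            rw [← sq_abs]
            exact pow_le_pow_left₀ (abs_nonneg _) (hxbR n) 2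
          linarith
        refine (Finset.sum_le_sum hterm).trans ?_
        rw [Finset.sum_const, Nat.card_Icc, Nat.add_sub_cancel, nsmul_eq_mul]
        rw [show (N:ℝ) * (2 * (R / (4 * (N:ℝ) ^ 2)) ^ 2) = R ^ 2 / (8 * (N:ℝ) ^ 3) by
          field_simp; ring]
      have hT : |T| ≤ K / (N:ℝ) ^ 3 := by
        have h1 : |T| ≤ |T - ∑ n ∈ Finset.Icc 1 N, x n| + |∑ n ∈ Finset.Icc 1 N, x n| := by
          calc |T| = |(T - ∑ n ∈ Finset.Icc 1 N, x n) + ∑ n ∈ Finset.Icc 1 N, x n| := by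
                congr 1
                ring
            _ ≤ _ := abs_add_le _ _
        have h2 : R ^ 2 / (8 * (N:ℝ) ^ 3) + R / (4 * (N:ℝ) ^ 3) = K / (N:ℝ) ^ 3 := by
          rw [hKdef]; field_simp; ring
        linarith [hTS, hS]
      have hT1 : |T| ≤ 1 := by
        refine hT.trans ?_
        rw [div_le_one hN3]
        have h3 : (N:ℝ) ≤ (N:ℝ) ^ 3 := le_self_pow₀ hN1 (by norm_num)
        linarith
      calc |(∏ n ∈ Finset.Icc 1 N, (1 + x n)) - 1| = |Real.exp T - 1| := by rw [hprod]
        _ ≤ 2 * |T| := Real.abs_exp_sub_one_le hT1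
        _ ≤ 2 * (K / (N:ℝ) ^ 3) := by linarith
        _ = (2 * K) / (N:ℝ) ^ 3 := by ring
        _ ≤ C / (N:ℝ) ^ 3 := by
            gcongr
            have h1 : (0:ℝ) ≤ (N₀ : ℝ) ^ 3 * ((1 + R) ^ N₀ + 2) := by positivity
            rw [hCdef]; linarith
    · -- small N
      push_neg at hcase
      have hNcast : (N : ℝ) ≤ (N₀ : ℝ) := by exact_mod_cast hcase.le
      have hxR : ∀ n, |x n| ≤ R := by
        intro n
        refine (hxbR n).trans ?_
        have h4 : (1:ℝ) ≤ 4 * (N:ℝ) ^ 2 := by nlinarith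
        calc R / (4 * (N:ℝ) ^ 2) ≤ R / 1 := div_le_div_of_nonneg_left hR.le one_pos h4
          _ = R := div_one R
      have hP : |∏ n ∈ Finset.Icc 1 N, (1 + x n)| ≤ (1 + R) ^ N₀ := by
        rw [Finset.abs_prod]
        calc (∏ n ∈ Finset.Icc 1 N, |1 + x n|) ≤ ∏ _n ∈ Finset.Icc 1 N, (1 + R) := by
              refine Finset.prod_le_prod (fun n _ => abs_nonneg _) (fun n _ => ?_)
              calc |1 + x n| ≤ |(1:ℝ)| + |x n| := abs_add_le _ _
                _ ≤ 1 + R := by rw [abs_one]; linarith [hxR n]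
          _ = (1 + R) ^ N := by rw [Finset.prod_const, Nat.card_Icc, Nat.add_sub_cancel]
          _ ≤ (1 + R) ^ N₀ := pow_le_pow_right₀ (by linarith) hcase.le
      have hb1 : |(∏ n ∈ Finset.Icc 1 N, (1 + x n)) - 1|
          ≤ (1 + R) ^ N₀ + 2 := by
        calc |(∏ n ∈ Finset.Icc 1 N, (1 + x n)) - 1|
            ≤ |∏ n ∈ Finset.Icc 1 N, (1 + x n)| + |(1:ℝ)| := abs_sub _ _
          _ ≤ (1 + R) ^ N₀ + 2 := by rw [abs_one]; linarith
      refine hb1.trans ?_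
      rw [le_div_iff₀ hN3]
      calc ((1 + R) ^ N₀ + 2) * (N:ℝ) ^ 3 ≤ ((1 + R) ^ N₀ + 2) * (N₀:ℝ) ^ 3 := by
            gcongr
        _ ≤ C := by rw [hCdef]; nlinarith
  · -- sum bound
    rw [abs_div, abs_of_pos (show (0:ℝ) < 4 * (N:ℝ) ^ 2 by positivity)]
    calc |∑ n ∈ Finset.Icc 1 N, β ((n : ℝ) / N)| / (4 * (N:ℝ) ^ 2)
        ≤ (R / N) / (4 * (N:ℝ) ^ 2) := by
          apply div_le_div_of_nonneg_right ?_ (by positivity)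
          exact hsumβ
      _ = (R / 4) / (N:ℝ) ^ 3 := by rw [div_div, div_div]; congr 1; ring
      _ ≤ C / (N:ℝ) ^ 3 := div_le_div_of_nonneg_right (by linarith) hN3.le
end

section
/- L² bounds on derivatives of periodic eigenfunctions of a Hill operator (Lemma 6.1): Let q : ℝ → ℝ be C² and 1-periodic and set Q = sup_x (|q(x)| + |q'(x)| + |q''(x)|). Let λ ∈ ℝ and L ≥ 0 with |λ| ≤ L and Q + L ≥ 1, and let g : ℝ → ℝ be a C⁴, 1-periodic function with −g'' + q g = λ g and ∫₀¹ g(x)² dx = 1. Then: (i) ‖g'‖_{L²(0,1)} ≤ (Q + L)^{1/2}; (ii) ‖g''‖_{L²(0,1)} ≤ Q + L; (iii) ‖g'''‖_{L²(0,1)} ≤ (Q + L)^{3/2} + Q; (iv) ‖g''''‖_{L²(0,1)} ≤ 3(Q + L)² + Q. -/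
open intervalIntegral MeasureTheory Real

private lemma sq_int_nonneg (v : ℝ → ℝ) : 0 ≤ ∫ x in (0:ℝ)..1, v x ^ 2 :=
  intervalIntegral.integral_nonneg (by norm_num) (fun x _ => sq_nonneg _)

private lemma cs_int (u v : ℝ → ℝ) (hu : Continuous u) (hv : Continuous v) :
    ∫ x in (0:ℝ)..1, u x * v x ≤
      Real.sqrt (∫ x in (0:ℝ)..1, u x ^ 2) * Real.sqrt (∫ x in (0:ℝ)..1, v x ^ 2) := by
  set A := ∫ x in (0:ℝ)..1, u x ^ 2 with hA
  set C := ∫ x in (0:ℝ)..1, v x ^ 2 with hC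
  set B := ∫ x in (0:ℝ)..1, u x * v x with hB
  have hA0 : 0 ≤ A := sq_int_nonneg u
  have hC0 : 0 ≤ C := sq_int_nonneg v
  have key : ∀ t : ℝ, 0 ≤ C * (t * t) + (2 * B) * t + A := by
    intro t
    have h0 : (0:ℝ) ≤ ∫ x in (0:ℝ)..1, (u x + t * v x) ^ 2 := sq_int_nonneg _
    have hexp : (∫ x in (0:ℝ)..1, (u x + t * v x) ^ 2)
        = (∫ x in (0:ℝ)..1, u x ^ 2) + ((2 * t) * ∫ x in (0:ℝ)..1, u x * v x)
          + ((t * t) * ∫ x in (0:ℝ)..1, v x ^ 2) := by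
      rw [← intervalIntegral.integral_const_mul, ← intervalIntegral.integral_const_mul,
        ← intervalIntegral.integral_add
          ((show Continuous (fun x => u x ^ 2) from hu.pow 2).intervalIntegrable 0 1)
          ((show Continuous (fun x => 2 * t * (u x * v x)) from
            continuous_const.mul (hu.mul hv)).intervalIntegrable 0 1),
        ← intervalIntegral.integral_add
          ((show Continuous (fun x => u x ^ 2 + 2 * t * (u x * v x)) from
            (hu.pow 2).add (continuous_const.mul (hu.mul hv))).intervalIntegrable 0 1)
          ((show Continuous (fun x => t * t * v x ^ 2) from
            continuous_const.mul (hv.pow 2)).intervalIntegrable 0 1)]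
      apply intervalIntegral.integral_congr
      intro x _; ring
    rw [hexp] at h0
    linarith
  have hd := discrim_le_zero key
  rw [discrim] at hd
  have hB2 : B ^ 2 ≤ A * C := by nlinarith
  calc B ≤ |B| := le_abs_self B
    _ = Real.sqrt (B ^ 2) := (Real.sqrt_sq_eq_abs B).symm
    _ ≤ Real.sqrt (A * C) := Real.sqrt_le_sqrt hB2
    _ = Real.sqrt A * Real.sqrt C := Real.sqrt_mul hA0 _

private lemma mink_int (u v : ℝ → ℝ) (hu : Continuous u) (hv : Continuous v) :
    Real.sqrt (∫ x in (0:ℝ)..1, (u x + v x) ^ 2) ≤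
      Real.sqrt (∫ x in (0:ℝ)..1, u x ^ 2) + Real.sqrt (∫ x in (0:ℝ)..1, v x ^ 2) := by
  set A := Real.sqrt (∫ x in (0:ℝ)..1, u x ^ 2) with hA
  set C := Real.sqrt (∫ x in (0:ℝ)..1, v x ^ 2) with hC
  have hA0 : 0 ≤ A := Real.sqrt_nonneg _
  have hC0 : 0 ≤ C := Real.sqrt_nonneg _
  have hAsq : A ^ 2 = ∫ x in (0:ℝ)..1, u x ^ 2 := Real.sq_sqrt (sq_int_nonneg u)
  have hCsq : C ^ 2 = ∫ x in (0:ℝ)..1, v x ^ 2 := Real.sq_sqrt (sq_int_nonneg v)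
  have hcs := cs_int u v hu hv
  have h1 : (∫ x in (0:ℝ)..1, (u x + v x) ^ 2) ≤ (A + C) ^ 2 := by
    have hexp : (∫ x in (0:ℝ)..1, (u x + v x) ^ 2)
        = (∫ x in (0:ℝ)..1, u x ^ 2) + ((2:ℝ) * ∫ x in (0:ℝ)..1, u x * v x)
          + (∫ x in (0:ℝ)..1, v x ^ 2) := by
      rw [← intervalIntegral.integral_const_mul,
        ← intervalIntegral.integral_add
          ((show Continuous (fun x => u x ^ 2) from hu.pow 2).intervalIntegrable 0 1)
          ((show Continuous (fun x => (2:ℝ) * (u x * v x)) from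
            continuous_const.mul (hu.mul hv)).intervalIntegrable 0 1),
        ← intervalIntegral.integral_add
          ((show Continuous (fun x => u x ^ 2 + (2:ℝ) * (u x * v x)) from
            (hu.pow 2).add (continuous_const.mul (hu.mul hv))).intervalIntegrable 0 1)
          ((show Continuous (fun x => v x ^ 2) from hv.pow 2).intervalIntegrable 0 1)]
      apply intervalIntegral.integral_congr
      intro x _; ring
    rw [hexp]; nlinarith
  calc Real.sqrt (∫ x in (0:ℝ)..1, (u x + v x) ^ 2)
      ≤ Real.sqrt ((A + C) ^ 2) := Real.sqrt_le_sqrt h1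
    _ = |A + C| := Real.sqrt_sq_eq_abs _
    _ = A + C := abs_of_nonneg (by linarith)

private lemma l2_bound (w v : ℝ → ℝ) (hw : Continuous w) (hv : Continuous v) (c : ℝ)
    (hc : 0 ≤ c) (h : ∀ x, |w x| ≤ c * |v x|) :
    Real.sqrt (∫ x in (0:ℝ)..1, w x ^ 2) ≤ c * Real.sqrt (∫ x in (0:ℝ)..1, v x ^ 2) := by
  have hmono : (∫ x in (0:ℝ)..1, w x ^ 2) ≤ ∫ x in (0:ℝ)..1, c ^ 2 * v x ^ 2 := by
    apply intervalIntegral.integral_mono_on (by norm_num)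
      ((hw.pow 2).intervalIntegrable 0 1)
      ((continuous_const.mul (hv.pow 2)).intervalIntegrable 0 1)
    intro x _
    show w x ^ 2 ≤ c ^ 2 * v x ^ 2
    have h1 := h x
    nlinarith [abs_nonneg (w x), abs_nonneg (v x), sq_abs (w x), sq_abs (v x)]
  calc Real.sqrt (∫ x in (0:ℝ)..1, w x ^ 2)
      ≤ Real.sqrt (c ^ 2 * ∫ x in (0:ℝ)..1, v x ^ 2) := by
        rw [← intervalIntegral.integral_const_mul] ; exact Real.sqrt_le_sqrt hmono
    _ = c * Real.sqrt (∫ x in (0:ℝ)..1, v x ^ 2) := by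
        rw [Real.sqrt_mul (sq_nonneg c), Real.sqrt_sq hc]

/-- Lemma 6.1: L² bounds on the derivatives of a normalized periodic
eigenfunction of the Hill operator `-d²/dx² + q`. -/
theorem hill_eigenfunction_derivative_bounds
    (q : ℝ → ℝ) (hq : ContDiff ℝ 2 q) (hqper : Function.Periodic q 1)
    (Q : ℝ) (hQ : Q = ⨆ x : ℝ, (|q x| + |deriv q x| + |deriv (deriv q) x|))
    (lam L : ℝ) (hL : 0 ≤ L) (hlam : |lam| ≤ L) (hQL : 1 ≤ Q + L)
    (g : ℝ → ℝ) (hg : ContDiff ℝ 4 g) (hgper : Function.Periodic g 1)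
    (heq : ∀ x, -deriv (deriv g) x + q x * g x = lam * g x)
    (hnorm : (∫ x in (0:ℝ)..1, g x ^ 2) = 1) :
    Real.sqrt (∫ x in (0:ℝ)..1, deriv g x ^ 2) ≤ (Q + L) ^ ((1:ℝ)/2) ∧
    Real.sqrt (∫ x in (0:ℝ)..1, deriv (deriv g) x ^ 2) ≤ Q + L ∧
    Real.sqrt (∫ x in (0:ℝ)..1, deriv (deriv (deriv g)) x ^ 2)
      ≤ (Q + L) ^ ((3:ℝ)/2) + Q ∧
    Real.sqrt (∫ x in (0:ℝ)..1, deriv (deriv (deriv (deriv g))) x ^ 2)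
      ≤ 3 * (Q + L) ^ 2 + Q := by
  -- smoothness facts
  have hq' : ContDiff ℝ (1+1) q := by norm_num; exact hq
  have hqd : Differentiable ℝ q := (contDiff_succ_iff_deriv.1 hq').1
  have hq1 : ContDiff ℝ 1 (deriv q) := (contDiff_succ_iff_deriv.1 hq').2.2
  have hq1d : Differentiable ℝ (deriv q) := (contDiff_one_iff_deriv.1 hq1).1
  have hqc : Continuous q := hq.continuous
  have hq1c : Continuous (deriv q) := hq1.continuous
  have hq2c : Continuous (deriv (deriv q)) := (contDiff_one_iff_deriv.1 hq1).2
  have hg' : ContDiff ℝ (3+1) g := by norm_num; exact hg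
  have hgd : Differentiable ℝ g := (contDiff_succ_iff_deriv.1 hg').1
  have hg1 : ContDiff ℝ (2+1) (deriv g) := by
    have := (contDiff_succ_iff_deriv.1 hg').2.2; norm_num; exact this
  have hg1d : Differentiable ℝ (deriv g) := (contDiff_succ_iff_deriv.1 hg1).1
  have hg2 : ContDiff ℝ 2 (deriv (deriv g)) := (contDiff_succ_iff_deriv.1 hg1).2.2
  have hgc : Continuous g := hg.continuous
  have hg1c : Continuous (deriv g) := hg1.continuous
  have hg2c : Continuous (deriv (deriv g)) := hg2.continuous
  -- periodicity of derivatives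
  have perdiv : ∀ f : ℝ → ℝ, Function.Periodic f 1 → Function.Periodic (deriv f) 1 := by
    intro f hf x
    have hfun : (fun y => f (y + 1)) = f := funext fun y => hf y
    rw [← deriv_comp_add_const f 1 x, hfun]
  -- bound Q
  have hFc : Continuous (fun x : ℝ => |q x| + |deriv q x| + |deriv (deriv q) x|) :=
    (hqc.abs.add hq1c.abs).add hq2c.abs
  have hFper : Function.Periodic (fun x : ℝ => |q x| + |deriv q x| + |deriv (deriv q) x|) 1 := by
    intro x
    simp only [hqper x, (perdiv q hqper) x, (perdiv _ (perdiv q hqper)) x]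
  have hFbdd : BddAbove (Set.range (fun x : ℝ => |q x| + |deriv q x| + |deriv (deriv q) x|)) := by
    rw [← hFper.image_Icc one_pos 0]
    exact (isCompact_Icc.image hFc).bddAbove
  have hFQ : ∀ x : ℝ, |q x| + |deriv q x| + |deriv (deriv q) x| ≤ Q := by
    intro x; rw [hQ]; exact le_ciSup hFbdd x
  have hQ0 : 0 ≤ Q := le_trans (by positivity) (hFQ 0)
  have habs_q : ∀ x, |q x| ≤ Q := fun x => by
    have := hFQ x; have := abs_nonneg (deriv q x); have := abs_nonneg (deriv (deriv q) x); linarith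
  have habs_q1 : ∀ x, |deriv q x| ≤ Q := fun x => by
    have := hFQ x; have := abs_nonneg (q x); have := abs_nonneg (deriv (deriv q) x); linarith
  have habs_q2 : ∀ x, |deriv (deriv q) x| ≤ Q := fun x => by
    have := hFQ x; have := abs_nonneg (q x); have := abs_nonneg (deriv q x); linarith
  have habs_qlam : ∀ x, |q x - lam| ≤ Q + L := fun x =>
    (abs_sub (q x) lam).trans (add_le_add (habs_q x) hlam)
  have hQLpos : (0:ℝ) < Q + L := lt_of_lt_of_le one_pos hQL
  -- the eigen-equation, rearranged
  have hDD : ∀ x, deriv (deriv g) x = (q x - lam) * g x := by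
    intro x
    have h := heq x
    have : (q x - lam) * g x = q x * g x - lam * g x := by ring
    linarith
  have hsg : Real.sqrt (∫ x in (0:ℝ)..1, g x ^ 2) = 1 := by rw [hnorm, Real.sqrt_one]
  -- Part (i)
  have hibp : (∫ x in (0:ℝ)..1, g x * deriv (deriv g) x)
      = g 1 * deriv g 1 - g 0 * deriv g 0 - ∫ x in (0:ℝ)..1, deriv g x * deriv g x :=
    intervalIntegral.integral_mul_deriv_eq_deriv_mul
      (fun x _ => (hgd x).hasDerivAt) (fun x _ => (hg1d x).hasDerivAt)
      (hg1c.intervalIntegrable 0 1) (hg2c.intervalIntegrable 0 1)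
  have hper1 : g 1 = g 0 := by have := hgper 0; simpa using this
  have hper2 : deriv g 1 = deriv g 0 := by have := (perdiv g hgper) 0; simpa using this
  have hI1 : (∫ x in (0:ℝ)..1, deriv g x ^ 2)
      = ∫ x in (0:ℝ)..1, -((q x - lam) * g x ^ 2) := by
    have e1 : (∫ x in (0:ℝ)..1, deriv g x ^ 2)
        = ∫ x in (0:ℝ)..1, deriv g x * deriv g x :=
      intervalIntegral.integral_congr fun x _ => by ring
    have e2 : (∫ x in (0:ℝ)..1, g x * deriv (deriv g) x)
        = ∫ x in (0:ℝ)..1, (q x - lam) * g x ^ 2 :=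
      intervalIntegral.integral_congr fun x _ => by rw [hDD x]; ring
    rw [e2, hper1, hper2] at hibp
    rw [e1, intervalIntegral.integral_neg]
    linarith
  have hI1le : (∫ x in (0:ℝ)..1, deriv g x ^ 2) ≤ Q + L := by
    rw [hI1]
    have hmono : (∫ x in (0:ℝ)..1, -((q x - lam) * g x ^ 2))
        ≤ ∫ x in (0:ℝ)..1, (Q + L) * g x ^ 2 := by
      apply intervalIntegral.integral_mono_on (by norm_num)
        (((hqc.sub continuous_const).mul (hgc.pow 2)).neg.intervalIntegrable 0 1)
        ((continuous_const.mul (hgc.pow 2)).intervalIntegrable 0 1)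
      intro x _
      show -((q x - lam) * g x ^ 2) ≤ (Q + L) * g x ^ 2
      have h1 := abs_le.1 (habs_qlam x)
      nlinarith [sq_nonneg (g x), h1.1, h1.2]
    rw [intervalIntegral.integral_const_mul, hnorm] at hmono
    linarith
  have part1 : Real.sqrt (∫ x in (0:ℝ)..1, deriv g x ^ 2) ≤ (Q + L) ^ ((1:ℝ)/2) := by
    rw [← Real.sqrt_eq_rpow]
    exact Real.sqrt_le_sqrt hI1le
  -- Part (ii)
  have part2 : Real.sqrt (∫ x in (0:ℝ)..1, deriv (deriv g) x ^ 2) ≤ Q + L := by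
    have := l2_bound (deriv (deriv g)) g hg2c hgc (Q + L) (le_of_lt hQLpos) (fun x => by
      rw [hDD x, abs_mul]
      exact mul_le_mul_of_nonneg_right (habs_qlam x) (abs_nonneg _))
    rw [hsg, mul_one] at this
    exact this
  -- third derivative formula
  have hD3 : ∀ x, deriv (deriv (deriv g)) x = deriv q x * g x + (q x - lam) * deriv g x := by
    intro x
    have hfun : deriv (deriv g) = fun y => (q y - lam) * g y := funext hDD
    rw [hfun]
    exact (((hqd x).hasDerivAt.sub_const lam).mul (hgd x).hasDerivAt).deriv
  -- auxiliary bounds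
  have hb_qg : Real.sqrt (∫ x in (0:ℝ)..1, (deriv q x * g x) ^ 2) ≤ Q := by
    have := l2_bound (fun x => deriv q x * g x) g (hq1c.mul hgc) hgc Q hQ0 (fun x => by
      rw [abs_mul]; exact mul_le_mul_of_nonneg_right (habs_q1 x) (abs_nonneg _))
    rw [hsg, mul_one] at this
    exact this
  have hb_qqg : Real.sqrt (∫ x in (0:ℝ)..1, (deriv (deriv q) x * g x) ^ 2) ≤ Q := by
    have := l2_bound (fun x => deriv (deriv q) x * g x) g (hq2c.mul hgc) hgc Q hQ0 (fun x => by
      rw [abs_mul]; exact mul_le_mul_of_nonneg_right (habs_q2 x) (abs_nonneg _))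
    rw [hsg, mul_one] at this
    exact this
  have hG1 : Real.sqrt (∫ x in (0:ℝ)..1, deriv g x ^ 2) ≤ (Q + L) ^ ((1:ℝ)/2) := part1
  have hb_qg' : Real.sqrt (∫ x in (0:ℝ)..1, (deriv q x * deriv g x) ^ 2)
      ≤ Q * Real.sqrt (∫ x in (0:ℝ)..1, deriv g x ^ 2) :=
    l2_bound (fun x => deriv q x * deriv g x) (deriv g) (hq1c.mul hg1c) hg1c Q hQ0 (fun x => by
      rw [abs_mul]; exact mul_le_mul_of_nonneg_right (habs_q1 x) (abs_nonneg _))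
  have hb_qlg' : Real.sqrt (∫ x in (0:ℝ)..1, ((q x - lam) * deriv g x) ^ 2)
      ≤ (Q + L) * Real.sqrt (∫ x in (0:ℝ)..1, deriv g x ^ 2) :=
    l2_bound (fun x => (q x - lam) * deriv g x) (deriv g)
      ((hqc.sub continuous_const).mul hg1c) hg1c (Q + L) (le_of_lt hQLpos) (fun x => by
      rw [abs_mul]; exact mul_le_mul_of_nonneg_right (habs_qlam x) (abs_nonneg _))
  have hb_qlg'' : Real.sqrt (∫ x in (0:ℝ)..1, ((q x - lam) * deriv (deriv g) x) ^ 2)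
      ≤ (Q + L) * Real.sqrt (∫ x in (0:ℝ)..1, deriv (deriv g) x ^ 2) :=
    l2_bound (fun x => (q x - lam) * deriv (deriv g) x) (deriv (deriv g))
      ((hqc.sub continuous_const).mul hg2c) hg2c (Q + L) (le_of_lt hQLpos) (fun x => by
      rw [abs_mul]; exact mul_le_mul_of_nonneg_right (habs_qlam x) (abs_nonneg _))
  have hpow32 : (Q + L) ^ ((3:ℝ)/2) = (Q + L) * (Q + L) ^ ((1:ℝ)/2) := by
    rw [show (3:ℝ)/2 = 1 + 1/2 by norm_num, Real.rpow_add hQLpos, Real.rpow_one]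
  -- Part (iii)
  have part3 : Real.sqrt (∫ x in (0:ℝ)..1, deriv (deriv (deriv g)) x ^ 2)
      ≤ (Q + L) ^ ((3:ℝ)/2) + Q := by
    have e : (∫ x in (0:ℝ)..1, deriv (deriv (deriv g)) x ^ 2)
        = ∫ x in (0:ℝ)..1, ((q x - lam) * deriv g x + deriv q x * g x) ^ 2 :=
      intervalIntegral.integral_congr fun x _ => by rw [hD3 x]; ring
    rw [e]
    have key := mink_int (fun x => (q x - lam) * deriv g x) (fun x => deriv q x * g x)
      ((hqc.sub continuous_const).mul hg1c) (hq1c.mul hgc)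
    have h1 : (Q + L) * Real.sqrt (∫ x in (0:ℝ)..1, deriv g x ^ 2) ≤ (Q + L) ^ ((3:ℝ)/2) := by
      rw [hpow32]
      exact mul_le_mul_of_nonneg_left hG1 (le_of_lt hQLpos)
    calc Real.sqrt (∫ x in (0:ℝ)..1, ((q x - lam) * deriv g x + deriv q x * g x) ^ 2)
        ≤ Real.sqrt (∫ x in (0:ℝ)..1, ((q x - lam) * deriv g x) ^ 2)
          + Real.sqrt (∫ x in (0:ℝ)..1, (deriv q x * g x) ^ 2) := key
      _ ≤ (Q + L) ^ ((3:ℝ)/2) + Q := add_le_add (le_trans hb_qlg' h1) hb_qg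
  -- fourth derivative formula
  have hD4 : ∀ x, deriv (deriv (deriv (deriv g))) x
      = (deriv (deriv q) x * g x + deriv q x * deriv g x)
        + (deriv q x * deriv g x + (q x - lam) * deriv (deriv g) x) := by
    intro x
    have hfun : deriv (deriv (deriv g))
        = fun y => deriv q y * g y + (q y - lam) * deriv g y := funext hD3
    rw [hfun]
    exact (((hq1d x).hasDerivAt.mul (hgd x).hasDerivAt).add
      (((hqd x).hasDerivAt.sub_const lam).mul (hg1d x).hasDerivAt)).deriv
  -- Part (iv)
  have hhalf_le : (Q + L) ^ ((1:ℝ)/2) ≤ Q + L := by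
    calc (Q + L) ^ ((1:ℝ)/2) ≤ (Q + L) ^ (1:ℝ) :=
          Real.rpow_le_rpow_of_exponent_le hQL (by norm_num)
      _ = Q + L := Real.rpow_one _
  have hG1' : Real.sqrt (∫ x in (0:ℝ)..1, deriv g x ^ 2) ≤ Q + L := le_trans hG1 hhalf_le
  have part4 : Real.sqrt (∫ x in (0:ℝ)..1, deriv (deriv (deriv (deriv g))) x ^ 2)
      ≤ 3 * (Q + L) ^ 2 + Q := by
    have e : (∫ x in (0:ℝ)..1, deriv (deriv (deriv (deriv g))) x ^ 2)
        = ∫ x in (0:ℝ)..1, ((deriv (deriv q) x * g x + deriv q x * deriv g x)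
          + (deriv q x * deriv g x + (q x - lam) * deriv (deriv g) x)) ^ 2 :=
      intervalIntegral.integral_congr fun x _ => by rw [hD4 x]
    rw [e]
    have cu1 : Continuous (fun x => deriv (deriv q) x * g x + deriv q x * deriv g x) :=
      (hq2c.mul hgc).add (hq1c.mul hg1c)
    have cu2 : Continuous (fun x => deriv q x * deriv g x + (q x - lam) * deriv (deriv g) x) :=
      (hq1c.mul hg1c).add ((hqc.sub continuous_const).mul hg2c)
    have k1 := mink_int _ _ cu1 cu2
    have k2 := mink_int (fun x => deriv (deriv q) x * g x) (fun x => deriv q x * deriv g x)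
      (hq2c.mul hgc) (hq1c.mul hg1c)
    have k3 := mink_int (fun x => deriv q x * deriv g x)
      (fun x => (q x - lam) * deriv (deriv g) x)
      (hq1c.mul hg1c) ((hqc.sub continuous_const).mul hg2c)
    have hQle : Q ≤ Q + L := by linarith
    have hx1 : Q * Real.sqrt (∫ x in (0:ℝ)..1, deriv g x ^ 2) ≤ (Q + L) ^ 2 := by
      rw [sq]
      exact mul_le_mul hQle hG1' (Real.sqrt_nonneg _) (le_of_lt hQLpos)
    have hx2 : (Q + L) * Real.sqrt (∫ x in (0:ℝ)..1, deriv (deriv g) x ^ 2)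
        ≤ (Q + L) ^ 2 := by
      rw [sq]
      exact mul_le_mul_of_nonneg_left part2 (le_of_lt hQLpos)
    calc Real.sqrt (∫ x in (0:ℝ)..1, ((deriv (deriv q) x * g x + deriv q x * deriv g x)
          + (deriv q x * deriv g x + (q x - lam) * deriv (deriv g) x)) ^ 2)
        ≤ Real.sqrt (∫ x in (0:ℝ)..1, (deriv (deriv q) x * g x + deriv q x * deriv g x) ^ 2)
          + Real.sqrt (∫ x in (0:ℝ)..1,
              (deriv q x * deriv g x + (q x - lam) * deriv (deriv g) x) ^ 2) := k1
      _ ≤ (Real.sqrt (∫ x in (0:ℝ)..1, (deriv (deriv q) x * g x) ^ 2)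
            + Real.sqrt (∫ x in (0:ℝ)..1, (deriv q x * deriv g x) ^ 2))
          + (Real.sqrt (∫ x in (0:ℝ)..1, (deriv q x * deriv g x) ^ 2)
            + Real.sqrt (∫ x in (0:ℝ)..1, ((q x - lam) * deriv (deriv g) x) ^ 2)) :=
        add_le_add k2 k3
      _ ≤ 3 * (Q + L) ^ 2 + Q := by
        have b1 := hb_qqg
        have b2 := le_trans hb_qg' hx1
        have b3 := le_trans hb_qlg'' hx2
        linarith
  exact ⟨part1, part2, part3, part4⟩
end

section
/- Near-isometry of the Lagrangian-state map in Fourier form (Lemma 3.3 (iii)): For every integer N ≥ 1 and all 1-periodic functions f, g : ℝ → ℂ of Sobolev class H¹ (i.e. f, g ∈ L²(ℝ/ℤ) with weak derivatives f', g' ∈ L²(ℝ/ℤ)), one has |∑_{n∈ℤ} f̂_n · conj(ĝ_n) · (1 − e^{−πn²/N})| ≤ (4πN)^{−1} ‖f'‖_{L²(0,1)} ‖g'‖_{L²(0,1)}. -/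
noncomputable section

open MeasureTheory

/-- The `n`-th Fourier coefficient `f̂_n = ∫₀¹ f(x) e^{-2πinx} dx`. -/
def fourierCoeff' (f : ℝ → ℂ) (n : ℤ) : ℂ :=
  ∫ x in (0:ℝ)..1, f x * Complex.exp (-2 * (Real.pi : ℂ) * Complex.I * (n : ℂ) * (x : ℂ))

open Set Complex intervalIntegral

lemma cc_ne_zero {n : ℤ} (hn : n ≠ 0) : (-2 * (Real.pi : ℂ) * Complex.I * (n : ℂ)) ≠ 0 := by
  simp [Real.pi_ne_zero, Complex.I_ne_zero, hn]

lemma norm_e (n : ℤ) (x : ℝ) :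
    ‖Complex.exp (-2 * (Real.pi : ℂ) * Complex.I * (n : ℂ) * (x : ℂ))‖ = 1 := by
  have h : (-2 * (Real.pi : ℂ) * Complex.I * (n : ℂ) * (x : ℂ))
      = ((-2 * Real.pi * (n : ℝ) * x : ℝ) : ℂ) * Complex.I := by push_cast; ring
  rw [h, Complex.norm_exp_ofReal_mul_I]

lemma exp_cc_one {n : ℤ} :
    Complex.exp (-2 * (Real.pi : ℂ) * Complex.I * (n : ℂ) * ((1:ℝ) : ℂ)) = 1 := by
  have h : (-2 * (Real.pi : ℂ) * Complex.I * (n : ℂ) * ((1:ℝ) : ℂ))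
      = ((-n : ℤ) : ℂ) * (2 * (Real.pi : ℂ) * Complex.I) := by push_cast; ring
  rw [h, Complex.exp_int_mul_two_pi_mul_I]

/-- Integration by parts for the Fourier coefficients of a function given as a primitive. -/
lemma fourierCoeff'_primitive (h : ℝ → ℂ) (hmeas : StronglyMeasurable h)
    (hint : IntegrableOn h (Set.Ioc (0:ℝ) 1))
    (hzero : (∫ t in (0:ℝ)..1, h t) = 0)
    (c : ℂ) (f : ℝ → ℂ) (hf : ∀ x, f x = c + ∫ t in (0:ℝ)..x, h t)
    (n : ℤ) (hn : n ≠ 0) :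
    fourierCoeff' f n = fourierCoeff' h n / (2 * (Real.pi : ℂ) * Complex.I * (n : ℂ)) := by
  set cc : ℂ := -2 * (Real.pi : ℂ) * Complex.I * (n : ℂ) with hccdef
  have hcc : cc ≠ 0 := cc_ne_zero hn
  set e : ℝ → ℂ := fun x => Complex.exp (cc * (x : ℂ)) with hedef
  set u : ℝ → ℂ := fun x => ∫ t in (0:ℝ)..x, h t with hudef
  set μ : Measure ℝ := volume.restrict (Set.Ioc (0:ℝ) 1) with hμ
  have hμfin : IsFiniteMeasure μ := by
    constructor
    rw [hμ, Measure.restrict_apply_univ]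
    simp [Real.volume_Ioc]
  have hintμ : Integrable h μ := hint
  have hecont : Continuous e :=
    Complex.continuous_exp.comp (continuous_const.mul Complex.continuous_ofReal)
  have hIccint : IntegrableOn h (Set.Icc (0:ℝ) 1) := by
    rwa [integrableOn_Icc_iff_integrableOn_Ioc]
  have hucont : ContinuousOn u (Set.Icc (0:ℝ) 1) := by
    have := intervalIntegral.continuousOn_primitive (f := h) (a := 0) (b := 1)
      (μ := volume) hIccint
    refine ContinuousOn.congr this ?_
    intro x hx
    simp only [hudef]
    rw [intervalIntegral.integral_of_le hx.1]
  -- interval integrability of the two pieces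
  have int1 : IntervalIntegrable (fun x => c * e x) volume 0 1 :=
    (continuous_const.mul hecont).intervalIntegrable 0 1
  have int2 : IntervalIntegrable (fun x => u x * e x) volume 0 1 := by
    apply ContinuousOn.intervalIntegrable
    rw [Set.uIcc_of_le zero_le_one]
    exact hucont.mul hecont.continuousOn
  have hnorm_e : ∀ x : ℝ, ‖e x‖ = 1 := by
    intro x; simp only [hedef, hccdef]; exact norm_e n x
  -- the Fubini step
  have hF : (∫ x in (0:ℝ)..1, u x * e x)
      = ∫ t in (0:ℝ)..1, h t * ((Complex.exp (cc * ((1:ℝ):ℂ)) - Complex.exp (cc * (t:ℂ))) / cc) := by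
    set F : ℝ → ℝ → ℂ := fun x t => (Set.Ioc (0:ℝ) x).indicator h t * e x with hFdef
    have hS : MeasurableSet {p : ℝ × ℝ | p.2 ∈ Set.Ioc 0 p.1} := by
      have : {p : ℝ × ℝ | p.2 ∈ Set.Ioc 0 p.1}
          = {p : ℝ × ℝ | (0:ℝ) < p.2} ∩ {p : ℝ × ℝ | p.2 ≤ p.1} := by
        ext p; simp [Set.mem_Ioc, and_comm]
      rw [this]
      exact (measurableSet_lt measurable_const measurable_snd).inter
        (measurableSet_le measurable_snd measurable_fst)
    have hFsm : StronglyMeasurable (Function.uncurry F) := by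
      have h1 : StronglyMeasurable
          (fun p : ℝ × ℝ => Set.indicator {p : ℝ × ℝ | p.2 ∈ Set.Ioc 0 p.1}
            (fun q => h q.2) p) :=
        (hmeas.comp_measurable measurable_snd).indicator hS
      have h2 : StronglyMeasurable (fun p : ℝ × ℝ => e p.1) :=
        (hecont.comp continuous_fst).stronglyMeasurable
      exact h1.mul h2
    have hb : Integrable (fun p : ℝ × ℝ => h p.2) (μ.prod μ) := by
      have hsm : AEStronglyMeasurable (fun p : ℝ × ℝ => h p.2) (μ.prod μ) :=
        (hmeas.comp_measurable measurable_snd).aestronglyMeasurable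
      rw [MeasureTheory.integrable_prod_iff hsm]
      refine ⟨Filter.Eventually.of_forall fun x => hintμ, ?_⟩
      exact (integrable_const (∫ y, ‖h y‖ ∂μ)).congr (Filter.Eventually.of_forall fun x => rfl)
    have hFint : Integrable (Function.uncurry F) (μ.prod μ) := by
      refine Integrable.mono' hb.norm hFsm.aestronglyMeasurable ?_
      refine Filter.Eventually.of_forall fun p => ?_
      have hnm : ‖Function.uncurry F p‖
          = ‖(Set.Ioc (0:ℝ) p.1).indicator h p.2‖ * ‖e p.1‖ := norm_mul _ _
      rw [hnm, hnorm_e, mul_one]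
      exact norm_indicator_le_norm_self h p.2
    rw [intervalIntegral.integral_of_le zero_le_one,
        intervalIntegral.integral_of_le zero_le_one]
    calc (∫ x in Set.Ioc (0:ℝ) 1, u x * e x)
        = ∫ x in Set.Ioc (0:ℝ) 1, ∫ t, F x t ∂μ := by
          refine setIntegral_congr_fun measurableSet_Ioc fun x hx => ?_
          have hux : u x = ∫ t, (Set.Ioc (0:ℝ) x).indicator h t ∂μ := by
            simp only [hudef]
            rw [intervalIntegral.integral_of_le hx.1.le,
              MeasureTheory.integral_indicator measurableSet_Ioc, hμ,
              Measure.restrict_restrict measurableSet_Ioc,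
              Set.inter_eq_left.2 (Set.Ioc_subset_Ioc le_rfl hx.2)]
          rw [hux, hFdef, ← MeasureTheory.integral_mul_const]
      _ = ∫ t, ∫ x, F x t ∂μ ∂μ := MeasureTheory.integral_integral_swap hFint
      _ = ∫ t in Set.Ioc (0:ℝ) 1, h t * ((Complex.exp (cc * ((1:ℝ):ℂ)) - Complex.exp (cc * (t:ℂ))) / cc) := by
          refine setIntegral_congr_fun measurableSet_Ioc fun t ht => ?_
          have hpt : ∀ x : ℝ, F x t
              = (Set.Ici t).indicator (fun x : ℝ => h t * e x) x := by
            intro x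
            by_cases hx : t ≤ x
            · rw [Set.indicator_of_mem (Set.mem_Ici.2 hx)]
              simp only [hFdef]
              rw [Set.indicator_of_mem (show t ∈ Set.Ioc (0:ℝ) x from ⟨ht.1, hx⟩)]
            · rw [Set.indicator_of_notMem (fun hc => hx (Set.mem_Ici.1 hc))]
              simp only [hFdef]
              rw [Set.indicator_of_notMem (fun hc => hx hc.2), zero_mul]
          calc (∫ x, F x t ∂μ)
              = ∫ x, (Set.Ici t).indicator (fun x : ℝ => h t * e x) x ∂μ :=
                integral_congr_ae (Filter.Eventually.of_forall fun x => hpt x)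
            _ = ∫ x in Set.Icc t 1, h t * e x := by
                have hset : Set.Ici t ∩ Set.Ioc 0 1 = Set.Icc t 1 := by
                  ext x
                  simp only [Set.mem_inter_iff, Set.mem_Ioc, Set.mem_Ici, Set.mem_Icc]
                  constructor
                  · rintro ⟨hx2, _, hx1⟩; exact ⟨hx2, hx1⟩
                  · rintro ⟨hx1, hx2⟩; exact ⟨hx1, lt_of_lt_of_le ht.1 hx1, hx2⟩
                rw [MeasureTheory.integral_indicator measurableSet_Ici, hμ,
                  Measure.restrict_restrict measurableSet_Ici, hset]
            _ = ∫ x in Set.Ioc t 1, h t * e x := MeasureTheory.integral_Icc_eq_integral_Ioc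
            _ = ∫ x in t..(1:ℝ), h t * e x := (intervalIntegral.integral_of_le ht.2).symm
            _ = h t * ∫ x in t..(1:ℝ), e x := intervalIntegral.integral_const_mul _ _
            _ = h t * ((Complex.exp (cc * ((1:ℝ):ℂ)) - Complex.exp (cc * (t:ℂ))) / cc) := by
                simp only [hedef]
                rw [integral_exp_mul_complex hcc]
  -- assembling
  have hsplit : fourierCoeff' f n = (∫ x in (0:ℝ)..1, c * e x) + ∫ x in (0:ℝ)..1, u x * e x := by
    rw [fourierCoeff', ← intervalIntegral.integral_add int1 int2]
    refine intervalIntegral.integral_congr fun x _ => ?_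
    rw [hf x]
    simp only [hedef, hudef, hccdef]
    ring
  have hfirst : (∫ x in (0:ℝ)..1, c * e x) = 0 := by
    rw [intervalIntegral.integral_const_mul]
    simp only [hedef]
    rw [integral_exp_mul_complex hcc]
    have h1 : Complex.exp (cc * ((1:ℝ):ℂ)) = 1 := by rw [hccdef]; exact exp_cc_one
    have h0 : Complex.exp (cc * ((0:ℝ):ℂ)) = 1 := by norm_num
    rw [h1, h0]
    simp
  have h1 : Complex.exp (cc * ((1:ℝ):ℂ)) = 1 := by rw [hccdef]; exact exp_cc_one
  have hintcc : IntervalIntegrable (fun t => h t * e t) volume 0 1 := by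
    rw [intervalIntegrable_iff_integrableOn_Ioc_of_le zero_le_one]
    have hb := hintμ.bdd_mul (c := 1) (hecont.aestronglyMeasurable)
      (Filter.Eventually.of_forall fun x => le_of_eq (hnorm_e x))
    exact hb.congr (Filter.Eventually.of_forall fun x => mul_comm _ _)
  have hinth : IntervalIntegrable h volume 0 1 := by
    rw [intervalIntegrable_iff_integrableOn_Ioc_of_le zero_le_one]; exact hint
  have hsecond : (∫ x in (0:ℝ)..1, u x * e x)
      = fourierCoeff' h n / (2 * (Real.pi : ℂ) * Complex.I * (n : ℂ)) := by
    rw [hF]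
    have hptw : ∀ t : ℝ, h t * ((Complex.exp (cc * ((1:ℝ):ℂ)) - Complex.exp (cc * (t:ℂ))) / cc)
        = cc⁻¹ * h t - cc⁻¹ * (h t * e t) := by
      intro t
      rw [h1]
      simp only [hedef]
      rw [div_eq_mul_inv]
      ring
    rw [intervalIntegral.integral_congr (fun t _ => hptw t),
      intervalIntegral.integral_sub ((hinth).const_mul _) (hintcc.const_mul _),
      intervalIntegral.integral_const_mul, intervalIntegral.integral_const_mul, hzero, mul_zero]
    have hfc : fourierCoeff' h n = ∫ t in (0:ℝ)..1, h t * e t := by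
      rw [fourierCoeff']
    rw [← hfc, zero_sub, div_eq_mul_inv]
    have hinv : (2 * (Real.pi : ℂ) * Complex.I * (n : ℂ))⁻¹ = -cc⁻¹ := by
      rw [hccdef,
        show (-2 * (Real.pi : ℂ) * Complex.I * (n : ℂ))
          = -(2 * (Real.pi : ℂ) * Complex.I * (n : ℂ)) by ring,
        inv_neg, neg_neg]
    rw [hinv]
    ring
  rw [hsplit, hfirst, hsecond, zero_add]

lemma parseval_aux (h : ℝ → ℂ) (hmeas : StronglyMeasurable h)
    (hL2 : MemLp h 2 (volume.restrict (Set.Ioc (0:ℝ) 1))) :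
    Summable (fun n : ℤ => ‖fourierCoeff' h n‖ ^ 2) ∧
      ∑' n : ℤ, ‖fourierCoeff' h n‖ ^ 2 = ∫ x in (0:ℝ)..1, ‖h x‖ ^ 2 := by
  haveI : Fact (0 < (1:ℝ)) := ⟨one_pos⟩
  set F : AddCircle (1:ℝ) → ℂ := AddCircle.liftIoc 1 0 h with hFdef
  have hFsm : StronglyMeasurable F :=
    (hmeas.comp_measurable measurable_subtype_coe).comp_measurable
      (AddCircle.measurableEquivIoc 1 0).measurable
  have hmk : (fun x : ℝ => F ((x : ℝ) : AddCircle (1:ℝ)))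
      =ᵐ[volume.restrict (Set.Ioc (0:ℝ) 1)] h := by
    filter_upwards [ae_restrict_mem measurableSet_Ioc] with x hx
    exact AddCircle.liftIoc_coe_apply (by rwa [zero_add])
  have hmp : MeasurePreserving (fun x : ℝ => ((x : ℝ) : AddCircle (1:ℝ)))
      (volume.restrict (Set.Ioc (0:ℝ) 1)) (volume : Measure (AddCircle (1:ℝ))) := by
    have := AddCircle.measurePreserving_mk (1:ℝ) 0
    rwa [zero_add] at this
  have hvol : (volume : Measure (AddCircle (1:ℝ))) = AddCircle.haarAddCircle := by
    rw [AddCircle.volume_eq_smul_haarAddCircle]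
    simp
  have hFmem : MemLp F 2 (AddCircle.haarAddCircle : Measure (AddCircle (1:ℝ))) := by
    rw [← hvol, ← hmp.map_eq]
    refine (memLp_map_measure_iff hFsm.aestronglyMeasurable hmp.aemeasurable).2 ?_
    exact (memLp_congr_ae hmk).2 hL2
  set fL2 : Lp ℂ 2 (AddCircle.haarAddCircle : Measure (AddCircle (1:ℝ))) := hFmem.toLp F with hfL2
  have hcoeff : ∀ n : ℤ, fourierCoeff (fL2 : AddCircle (1:ℝ) → ℂ) n = fourierCoeff' h n := by
    intro n
    have h1 : fourierCoeff (fL2 : AddCircle (1:ℝ) → ℂ) n = fourierCoeff F n := by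
      rw [fourierCoeff, fourierCoeff]
      refine integral_congr_ae ?_
      filter_upwards [hFmem.coeFn_toLp] with t ht
      rw [ht]
    rw [h1, fourierCoeff_eq_intervalIntegral F n 0]
    rw [zero_add]
    simp only [one_div, one_smul]
    have : (1:ℝ)⁻¹ • (∫ x in (0:ℝ)..1, (fourier (-n) (x : AddCircle (1:ℝ))) • F (x : AddCircle (1:ℝ)))
        = ∫ x in (0:ℝ)..1, (fourier (-n) (x : AddCircle (1:ℝ))) • F (x : AddCircle (1:ℝ)) := by
      norm_num
    rw [this, fourierCoeff']
    rw [intervalIntegral.integral_of_le zero_le_one, intervalIntegral.integral_of_le zero_le_one]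
    refine setIntegral_congr_fun measurableSet_Ioc fun x hx => ?_
    have hFx : F ((x : ℝ) : AddCircle (1:ℝ)) = h x :=
      AddCircle.liftIoc_coe_apply (by rwa [zero_add])
    rw [hFx, fourier_coe_apply, smul_eq_mul, mul_comm]
    congr 1
    push_cast
    ring
  have hpars := tsum_sq_fourierCoeff fL2
  have hR : (∫ t : AddCircle (1:ℝ), ‖(fL2 : AddCircle (1:ℝ) → ℂ) t‖ ^ 2 ∂AddCircle.haarAddCircle)
      = ∫ x in (0:ℝ)..1, ‖h x‖ ^ 2 := by
    have h1 : (∫ t : AddCircle (1:ℝ), ‖(fL2 : AddCircle (1:ℝ) → ℂ) t‖ ^ 2 ∂AddCircle.haarAddCircle)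
        = ∫ t : AddCircle (1:ℝ), ‖F t‖ ^ 2 ∂AddCircle.haarAddCircle := by
      refine integral_congr_ae ?_
      filter_upwards [hFmem.coeFn_toLp] with t ht
      rw [ht]
    rw [h1, ← hvol]
    have h2 := AddCircle.intervalIntegral_preimage (1:ℝ) 0 (fun t => ‖F t‖ ^ 2)
    rw [zero_add] at h2
    rw [← h2]
    rw [intervalIntegral.integral_of_le zero_le_one, intervalIntegral.integral_of_le zero_le_one]
    refine setIntegral_congr_fun measurableSet_Ioc fun x hx => ?_
    have hFx : F ((x : ℝ) : AddCircle (1:ℝ)) = h x :=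
      AddCircle.liftIoc_coe_apply (by rwa [zero_add])
    rw [hFx]
  have hsum : Summable (fun n : ℤ => ‖fourierCoeff (fL2 : AddCircle (1:ℝ) → ℂ) n‖ ^ 2) := by
    have hmem := lp.memℓp (fourierBasis.repr fL2)
    have h2 := (memℓp_gen_iff (p := 2) (by norm_num)).1 hmem
    have h3 : ∀ n : ℤ, ‖fourierBasis.repr fL2 n‖ ^ (ENNReal.toReal 2)
        = ‖fourierCoeff (fL2 : AddCircle (1:ℝ) → ℂ) n‖ ^ 2 := by
      intro n
      rw [fourierBasis_repr]
      norm_num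
    exact (summable_congr h3).1 h2
  constructor
  · exact (summable_congr fun n => by rw [hcoeff n]).1 hsum
  · calc ∑' n : ℤ, ‖fourierCoeff' h n‖ ^ 2
        = ∑' n : ℤ, ‖fourierCoeff (fL2 : AddCircle (1:ℝ) → ℂ) n‖ ^ 2 := by
          exact tsum_congr fun n => by rw [hcoeff n]
      _ = _ := by rw [hpars, hR]

lemma tsum_mul_le_sqrt (a b : ℤ → ℝ) (ha : ∀ n, 0 ≤ a n) (hb : ∀ n, 0 ≤ b n)
    (hsa : Summable fun n => a n ^ 2) (hsb : Summable fun n => b n ^ 2) :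
    Summable (fun n => a n * b n) ∧
      ∑' n, a n * b n ≤ Real.sqrt (∑' n, a n ^ 2) * Real.sqrt (∑' n, b n ^ 2) := by
  have hs : Summable fun n => a n * b n := by
    refine Summable.of_nonneg_of_le (fun n => mul_nonneg (ha n) (hb n)) (fun n => ?_)
      ((hsa.add hsb).div_const 2)
    nlinarith [sq_nonneg (a n - b n)]
  refine ⟨hs, ?_⟩
  refine Summable.tsum_le_of_sum_le hs fun s => ?_
  calc ∑ n ∈ s, a n * b n
      ≤ Real.sqrt (∑ n ∈ s, a n ^ 2) * Real.sqrt (∑ n ∈ s, b n ^ 2) :=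
        Real.sum_mul_le_sqrt_mul_sqrt s a b
    _ ≤ Real.sqrt (∑' n, a n ^ 2) * Real.sqrt (∑' n, b n ^ 2) := by
        gcongr <;>
          first
            | positivity
            | exact Summable.sum_le_tsum s (fun i _ => sq_nonneg _) hsa
            | exact Summable.sum_le_tsum s (fun i _ => sq_nonneg _) hsb


/-- Lemma 3.3 (iii) in Fourier form: for 1-periodic `f, g` of Sobolev class `H¹`
(absolutely continuous with square integrable derivative),
`|∑_n f̂_n conj(ĝ_n)(1 - e^{-πn²/N})| ≤ (4πN)⁻¹ ‖f'‖_{L²(0,1)} ‖g'‖_{L²(0,1)}`. -/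
theorem near_isometry_fourier
    (N : ℕ) (hN : 1 ≤ N)
    (f g f' g' : ℝ → ℂ)
    (hfper : Function.Periodic f 1) (hgper : Function.Periodic g 1)
    (hf'per : Function.Periodic f' 1) (hg'per : Function.Periodic g' 1)
    (hf'loc : LocallyIntegrable f' volume) (hg'loc : LocallyIntegrable g' volume)
    (hf'L2 : MemLp f' 2 (volume.restrict (Set.Ioc (0:ℝ) 1)))
    (hg'L2 : MemLp g' 2 (volume.restrict (Set.Ioc (0:ℝ) 1)))
    (hf : ∀ x : ℝ, f x = f 0 + ∫ t in (0:ℝ)..x, f' t)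
    (hg : ∀ x : ℝ, g x = g 0 + ∫ t in (0:ℝ)..x, g' t) :
    ‖(∑' n : ℤ, fourierCoeff' f n * (starRingEnd ℂ) (fourierCoeff' g n) *
        (1 - Real.exp (-Real.pi * (n : ℝ) ^ 2 / N)))‖
      ≤ (4 * Real.pi * N)⁻¹ *
          (Real.sqrt (∫ x in (0:ℝ)..1, ‖f' x‖ ^ 2) *
            Real.sqrt (∫ x in (0:ℝ)..1, ‖g' x‖ ^ 2)) := by
  haveI : IsFiniteMeasure (volume.restrict (Set.Ioc (0:ℝ) 1)) := by
    constructor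
    rw [Measure.restrict_apply_univ]
    simp [Real.volume_Ioc]
  have hNpos : (0:ℝ) < N := by exact_mod_cast hN
  -- measurable representatives
  have hfa : AEStronglyMeasurable f' volume := hf'loc.aestronglyMeasurable
  have hga : AEStronglyMeasurable g' volume := hg'loc.aestronglyMeasurable
  set p : ℝ → ℂ := hfa.mk f' with hpdef
  set q : ℝ → ℂ := hga.mk g' with hqdef
  have hpm : StronglyMeasurable p := hfa.stronglyMeasurable_mk
  have hqm : StronglyMeasurable q := hga.stronglyMeasurable_mk
  have hp : f' =ᵐ[volume] p := hfa.ae_eq_mk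
  have hq : g' =ᵐ[volume] q := hga.ae_eq_mk
  -- transfer everything to p, q
  have hcoeffp : ∀ n : ℤ, fourierCoeff' f' n = fourierCoeff' p n := by
    intro n
    refine intervalIntegral.integral_congr_ae ?_
    filter_upwards [hp] with x hx _
    rw [hx]
  have hcoeffq : ∀ n : ℤ, fourierCoeff' g' n = fourierCoeff' q n := by
    intro n
    refine intervalIntegral.integral_congr_ae ?_
    filter_upwards [hq] with x hx _
    rw [hx]
  have hL2p : MemLp p 2 (volume.restrict (Set.Ioc (0:ℝ) 1)) :=
    (memLp_congr_ae (ae_restrict_of_ae hp)).1 hf'L2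
  have hL2q : MemLp q 2 (volume.restrict (Set.Ioc (0:ℝ) 1)) :=
    (memLp_congr_ae (ae_restrict_of_ae hq)).1 hg'L2
  have hintp : MeasureTheory.IntegrableOn p (Set.Ioc (0:ℝ) 1) := hL2p.integrable one_le_two
  have hintq : MeasureTheory.IntegrableOn q (Set.Ioc (0:ℝ) 1) := hL2q.integrable one_le_two
  have hIp : ∀ x : ℝ, (∫ t in (0:ℝ)..x, f' t) = ∫ t in (0:ℝ)..x, p t := by
    intro x
    refine intervalIntegral.integral_congr_ae ?_
    filter_upwards [hp] with t ht _
    rw [ht]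
  have hIq : ∀ x : ℝ, (∫ t in (0:ℝ)..x, g' t) = ∫ t in (0:ℝ)..x, q t := by
    intro x
    refine intervalIntegral.integral_congr_ae ?_
    filter_upwards [hq] with t ht _
    rw [ht]
  have hfp : ∀ x, f x = f 0 + ∫ t in (0:ℝ)..x, p t := fun x => by rw [hf x, hIp x]
  have hgq : ∀ x, g x = g 0 + ∫ t in (0:ℝ)..x, q t := fun x => by rw [hg x, hIq x]
  have hf10 : f 1 = f 0 := by simpa using hfper 0
  have hg10 : g 1 = g 0 := by simpa using hgper 0
  have hzerop : (∫ t in (0:ℝ)..1, p t) = 0 := by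
    have h3 : (∫ t in (0:ℝ)..1, f' t) = f 1 - f 0 := by rw [hf 1]; ring
    rw [← hIp 1, h3, hf10, sub_self]
  have hzeroq : (∫ t in (0:ℝ)..1, q t) = 0 := by
    have h3 : (∫ t in (0:ℝ)..1, g' t) = g 1 - g 0 := by rw [hg 1]; ring
    rw [← hIq 1, h3, hg10, sub_self]
  have hnormp : (∫ x in (0:ℝ)..1, ‖f' x‖ ^ 2) = ∫ x in (0:ℝ)..1, ‖p x‖ ^ 2 := by
    refine intervalIntegral.integral_congr_ae ?_
    filter_upwards [hp] with x hx _
    rw [hx]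
  have hnormq : (∫ x in (0:ℝ)..1, ‖g' x‖ ^ 2) = ∫ x in (0:ℝ)..1, ‖q x‖ ^ 2 := by
    refine intervalIntegral.integral_congr_ae ?_
    filter_upwards [hq] with x hx _
    rw [hx]
  -- Parseval
  obtain ⟨hsumA, hparsA⟩ := parseval_aux p hpm hL2p
  obtain ⟨hsumB, hparsB⟩ := parseval_aux q hqm hL2q
  set A : ℤ → ℝ := fun n => ‖fourierCoeff' p n‖ with hAdef
  set B : ℤ → ℝ := fun n => ‖fourierCoeff' q n‖ with hBdef
  -- Cauchy-Schwarz
  obtain ⟨hsAB, hCS⟩ := tsum_mul_le_sqrt A B (fun n => norm_nonneg _) (fun n => norm_nonneg _)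
    hsumA hsumB
  -- the integration by parts identities
  have hFn : ∀ n : ℤ, n ≠ 0 →
      fourierCoeff' f n = fourierCoeff' p n / (2 * (Real.pi:ℂ) * Complex.I * (n:ℂ)) :=
    fun n hn => fourierCoeff'_primitive p hpm hintp hzerop (f 0) f hfp n hn
  have hGn : ∀ n : ℤ, n ≠ 0 →
      fourierCoeff' g n = fourierCoeff' q n / (2 * (Real.pi:ℂ) * Complex.I * (n:ℂ)) :=
    fun n hn => fourierCoeff'_primitive q hqm hintq hzeroq (g 0) g hgq n hn
  -- the termwise bound
  set T : ℤ → ℂ := fun n => fourierCoeff' f n * (starRingEnd ℂ) (fourierCoeff' g n) *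
      (1 - Real.exp (-Real.pi * (n : ℝ) ^ 2 / N)) with hTdef
  have hkey : ∀ n : ℤ, ‖T n‖ ≤ (4 * Real.pi * N)⁻¹ * (A n * B n) := by
    intro n
    by_cases hn : n = 0
    · have : T n = 0 := by
        simp only [hTdef, hn]
        norm_num
      rw [this, norm_zero]
      have : 0 ≤ (4 * Real.pi * (N:ℝ))⁻¹ * (A 0 * B 0) := by
        apply mul_nonneg
        · apply inv_nonneg.2; positivity
        · exact mul_nonneg (norm_nonneg _) (norm_nonneg _)
      simpa [hn] using this
    · set En : ℝ := Real.exp (-Real.pi * (n : ℝ) ^ 2 / N) with hEndef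
      have hnR : ((n:ℝ)) ≠ 0 := by exact_mod_cast hn
      have hn2pos : (0:ℝ) < (n:ℝ) ^ 2 := by positivity
      have hxpos : (0:ℝ) ≤ Real.pi * (n:ℝ)^2 / N := by positivity
      have hEeq : En = Real.exp (-(Real.pi * (n:ℝ)^2 / N)) := by
        rw [hEndef]; ring_nf
      have hEle1 : En ≤ 1 := by
        rw [hEeq]
        exact Real.exp_le_one_iff.2 (by linarith)
      have hbound : 1 - En ≤ Real.pi * (n:ℝ)^2 / N := by
        have hx := Real.add_one_le_exp (-(Real.pi * (n:ℝ)^2 / N))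
        rw [← hEeq] at hx
        linarith
      have hnormden : ‖(2 * (Real.pi:ℂ) * Complex.I * (n:ℂ))‖ = 2 * Real.pi * |(n:ℝ)| := by
        simp only [norm_mul, Complex.norm_I, Complex.norm_two,
          Complex.norm_real, Real.norm_eq_abs, Complex.norm_intCast]
        rw [abs_of_pos Real.pi_pos]
        push_cast
        ring
      have hnormF : ‖fourierCoeff' f n‖ = A n / (2 * Real.pi * |(n:ℝ)|) := by
        rw [hFn n hn, norm_div, hnormden, hAdef]
      have hnormG : ‖fourierCoeff' g n‖ = B n / (2 * Real.pi * |(n:ℝ)|) := by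
        rw [hGn n hn, norm_div, hnormden, hBdef]
      have hnorm1E : ‖(1 - (En:ℂ) : ℂ)‖ = 1 - En := by
        rw [show (1 - (En:ℂ) : ℂ) = (((1 - En : ℝ)) : ℂ) by push_cast; ring,
          Complex.norm_real, Real.norm_eq_abs, _root_.abs_of_nonneg (by linarith)]
      have hTnorm : ‖T n‖ = A n / (2 * Real.pi * |(n:ℝ)|) * (B n / (2 * Real.pi * |(n:ℝ)|))
          * (1 - En) := by
        simp only [hTdef]
        rw [norm_mul, norm_mul, hnormF, RCLike.norm_conj, hnormG, ← hEndef, hnorm1E]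
      rw [hTnorm]
      calc A n / (2 * Real.pi * |(n:ℝ)|) * (B n / (2 * Real.pi * |(n:ℝ)|)) * (1 - En)
          ≤ A n / (2 * Real.pi * |(n:ℝ)|) * (B n / (2 * Real.pi * |(n:ℝ)|))
            * (Real.pi * (n:ℝ)^2 / N) := by
            have hfac : 0 ≤ A n / (2 * Real.pi * |(n:ℝ)|) * (B n / (2 * Real.pi * |(n:ℝ)|)) := by
              apply mul_nonneg <;>
                exact div_nonneg (norm_nonneg _) (by positivity)
            exact mul_le_mul_of_nonneg_left hbound hfac
        _ = (4 * Real.pi * N)⁻¹ * (A n * B n) := by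
            have hm : |(n:ℝ)| ≠ 0 := abs_ne_zero.2 hnR
            have hπ : Real.pi ≠ 0 := Real.pi_ne_zero
            have hNne : (N:ℝ) ≠ 0 := ne_of_gt hNpos
            field_simp
            ring_nf
            rw [_root_.sq_abs]
  -- summing up
  have hTsummable : Summable fun n => ‖T n‖ :=
    Summable.of_nonneg_of_le (fun n => norm_nonneg _) hkey (hsAB.mul_left _)
  have habs : ‖∑' n : ℤ, T n‖ = ‖∑' n : ℤ, T n‖ := rfl
  calc ‖∑' n : ℤ, T n‖
      = ‖∑' n : ℤ, T n‖ := habs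
    _ ≤ ∑' n : ℤ, ‖T n‖ := norm_tsum_le_tsum_norm hTsummable
    _ ≤ ∑' n : ℤ, (4 * Real.pi * N)⁻¹ * (A n * B n) :=
        Summable.tsum_le_tsum hkey hTsummable (hsAB.mul_left _)
    _ = (4 * Real.pi * N)⁻¹ * ∑' n : ℤ, A n * B n := tsum_mul_left
    _ ≤ (4 * Real.pi * N)⁻¹ * (Real.sqrt (∑' n, A n ^ 2) * Real.sqrt (∑' n, B n ^ 2)) := by
        apply mul_le_mul_of_nonneg_left hCS
        apply inv_nonneg.2; positivity
    _ = (4 * Real.pi * N)⁻¹ *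
          (Real.sqrt (∫ x in (0:ℝ)..1, ‖f' x‖ ^ 2) * Real.sqrt (∫ x in (0:ℝ)..1, ‖g' x‖ ^ 2)) := by
        rw [hparsA, hparsB, hnormp, hnormq]

end
end

section
/- Two-sided bounds for the partial cosine product, upper range (Lemma A.4): There exists a constant c > 0 such that for all integers M, N with 1 ≤ M < N: 2^M ≥ ∏_{n=1}^{M} (1 + cos(nπ/N)) ≥ 2^M · exp(−c M³/N²). -/
open scoped Real

lemma aux_pow_self_le (n : ℕ) : (n : ℝ) ^ n ≤ (Nat.factorial n : ℝ) * Real.exp n := by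
  induction n with
  | zero => simp
  | succ n ih =>
    have h1 : ((n : ℝ) + 1) ^ n ≤ (n : ℝ) ^ n * Real.exp 1 := by
      rcases Nat.eq_zero_or_pos n with rfl | hn
      · simpa using (Real.one_le_exp (by norm_num))
      · have hn' : (0 : ℝ) < n := by exact_mod_cast hn
        have hrw : ((n : ℝ) + 1) = n * (1 + 1 / n) := by field_simp
        rw [hrw, mul_pow]
        have hle : (1 : ℝ) + 1 / n ≤ Real.exp (1 / n) := by
          have := Real.add_one_le_exp (1 / (n : ℝ)); linarith
        have h2 : ((1 : ℝ) + 1 / n) ^ n ≤ Real.exp (1 / n) ^ n := by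
          apply pow_le_pow_left₀ (by positivity) hle
        have h3 : Real.exp (1 / (n : ℝ)) ^ n = Real.exp 1 := by
          rw [← Real.exp_nat_mul]; congr 1; field_simp
        rw [h3] at h2
        exact mul_le_mul_of_nonneg_left h2 (by positivity)
    have hcast : ((n + 1 : ℕ) : ℝ) = (n : ℝ) + 1 := by push_cast; ring
    calc ((n + 1 : ℕ) : ℝ) ^ (n + 1) = ((n : ℝ) + 1) * ((n : ℝ) + 1) ^ n := by
          rw [hcast]; ring
      _ ≤ ((n : ℝ) + 1) * ((n : ℝ) ^ n * Real.exp 1) := by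
          apply mul_le_mul_of_nonneg_left h1 (by positivity)
      _ ≤ ((n : ℝ) + 1) * (((Nat.factorial n : ℝ) * Real.exp n) * Real.exp 1) := by
          apply mul_le_mul_of_nonneg_left _ (by positivity)
          exact mul_le_mul_of_nonneg_right ih (Real.exp_pos 1).le
      _ = (Nat.factorial (n+1) : ℝ) * Real.exp ((n + 1 : ℕ) : ℝ) := by
          rw [Nat.factorial_succ]
          push_cast
          rw [Real.exp_add]
          ring
  
lemma aux_sum_log_le (N : ℕ) (hN : 1 ≤ N) :
    ∑ k ∈ Finset.Icc 1 N, Real.log ((N : ℝ) / k) ≤ N := by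
  have hN0 : (0 : ℝ) < N := by exact_mod_cast hN
  have hne : ∀ k ∈ Finset.Icc 1 N, ((N : ℝ) / k) ≠ 0 := by
    intro k hk
    rw [Finset.mem_Icc] at hk
    have : (0 : ℝ) < k := by exact_mod_cast hk.1
    positivity
  rw [← Real.log_prod hne]
  have hprod : (∏ k ∈ Finset.Icc 1 N, ((N : ℝ) / k)) = (N : ℝ) ^ N / (Nat.factorial N : ℝ) := by
    rw [Finset.prod_div_distrib, Finset.prod_const, Nat.card_Icc]
    have hcard : N + 1 - 1 = N := by omega
    rw [hcard]
    congr 1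
    · have : (∏ k ∈ Finset.Icc 1 N, (k : ℝ)) = ((∏ k ∈ Finset.Icc 1 N, k : ℕ) : ℝ) := by
        push_cast; ring
      rw [this]
      congr 1
      have : Finset.Icc 1 N = Finset.Ico 1 (N + 1) := by
        ext x; simp [Finset.mem_Icc, Finset.mem_Ico]
      rw [this, Finset.prod_Ico_id_eq_factorial]
  rw [hprod]
  have hfac : (0 : ℝ) < (Nat.factorial N : ℝ) := by exact_mod_cast N.factorial_pos
  have hle : (N : ℝ) ^ N / (Nat.factorial N : ℝ) ≤ Real.exp N := by
    rw [div_le_iff₀ hfac]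
    calc (N : ℝ) ^ N ≤ (Nat.factorial N : ℝ) * Real.exp N := aux_pow_self_le N
      _ = Real.exp N * (Nat.factorial N : ℝ) := by ring
  calc Real.log ((N : ℝ) ^ N / (Nat.factorial N : ℝ)) ≤ Real.log (Real.exp N) :=
        Real.log_le_log (by positivity) hle
    _ = N := Real.log_exp _

lemma aux_exp_le_one_sub {s : ℝ} (h0 : 0 ≤ s) (h1 : s ≤ 1 / 2) :
    Real.exp (-(2 * s)) ≤ 1 - s := by
  have h2 : 1 + 2 * s ≤ Real.exp (2 * s) := by
    have := Real.add_one_le_exp (2 * s); linarith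
  have hpos : (0 : ℝ) < Real.exp (2 * s) := Real.exp_pos _
  rw [Real.exp_neg, inv_eq_one_div, div_le_iff₀ hpos]
  nlinarith

set_option maxHeartbeats 1000000 in
/-- Lemma A.4: two-sided bounds for `∏_{n=1}^M (1 + cos(nπ/N))`, `1 ≤ M < N`. -/
theorem partial_cosine_product_upper_range :
    ∃ c : ℝ, 0 < c ∧ ∀ M N : ℕ, 1 ≤ M → M < N →
      (∏ n ∈ Finset.Icc 1 M, (1 + Real.cos ((n : ℝ) * π / N))) ≤ 2 ^ M ∧
      (2 : ℝ) ^ M * Real.exp (-c * (M : ℝ) ^ 3 / (N : ℝ) ^ 2)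
          ≤ ∏ n ∈ Finset.Icc 1 M, (1 + Real.cos ((n : ℝ) * π / N)) := by
  refine ⟨24, by norm_num, fun M N hM hMN => ?_⟩
  have hN1 : 1 ≤ N := le_of_lt (lt_of_le_of_lt hM hMN)
  have hN0 : (0 : ℝ) < N := by exact_mod_cast hN1
  constructor
  · calc (∏ n ∈ Finset.Icc 1 M, (1 + Real.cos ((n : ℝ) * π / N)))
        ≤ ∏ n ∈ Finset.Icc 1 M, (2 : ℝ) := by
          apply Finset.prod_le_prod
          · intro n _
            have := Real.neg_one_le_cos ((n : ℝ) * π / N); linarith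
          · intro n _
            have := Real.cos_le_one ((n : ℝ) * π / N); linarith
    _ = 2 ^ M := by rw [Finset.prod_const, Nat.card_Icc]; norm_num
  · set a : ℕ → ℝ := fun n =>
      if 2 * n ≤ N then 8 * (n : ℝ) ^ 2 / (N : ℝ) ^ 2
      else 2 * Real.log ((N : ℝ) / ((N : ℝ) - n)) with ha
    have key : ∀ n ∈ Finset.Icc 1 M,
        2 * Real.exp (-(a n)) ≤ 1 + Real.cos ((n : ℝ) * π / N) := by
      intro n hn
      rw [Finset.mem_Icc] at hn
      have hnN : n < N := lt_of_le_of_lt hn.2 hMN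
      have hnN' : (n : ℝ) < N := by exact_mod_cast hnN
      have hn0 : (0 : ℝ) < n := by exact_mod_cast hn.1
      set u : ℝ := (n : ℝ) * π / (2 * N) with hu
      have hpi : (0 : ℝ) < π := Real.pi_pos
      have hu0 : 0 ≤ u := by positivity
      have huhalf : u < π / 2 := by
        rw [hu, div_lt_div_iff₀ (by positivity) (by norm_num)]
        nlinarith
      have hcos_id : 1 + Real.cos ((n : ℝ) * π / N) = 2 * Real.cos u ^ 2 := by
        have h2u : 2 * u = (n : ℝ) * π / N := by rw [hu]; field_simp
        rw [Real.cos_sq, h2u]; ring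
      rw [hcos_id]
      have main : Real.exp (-(a n)) ≤ Real.cos u ^ 2 := by
        by_cases hsplit : 2 * n ≤ N
        · -- small angle case
          have han : a n = 8 * (n : ℝ) ^ 2 / (N : ℝ) ^ 2 := by rw [ha]; simp [hsplit]
          have hQ : u ≤ π / 4 := by
            rw [hu, div_le_div_iff₀ (by positivity) (by norm_num)]
            have : (2 : ℝ) * n ≤ N := by exact_mod_cast hsplit
            nlinarith
          have hple : π ≤ 4 := Real.pi_le_four
          have hs : u ^ 2 / 2 ≤ 1 / 2 := by nlinarith
          have hcl : 1 - u ^ 2 / 2 ≤ Real.cos u := Real.one_sub_sq_div_two_le_cos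
          have hexp : Real.exp (-(u ^ 2)) ≤ Real.cos u := by
            have := aux_exp_le_one_sub (s := u ^ 2 / 2) (by positivity) hs
            have heq : 2 * (u ^ 2 / 2) = u ^ 2 := by ring
            rw [heq] at this
            linarith
          have hsq : Real.exp (-(u ^ 2)) ^ 2 ≤ Real.cos u ^ 2 :=
            pow_le_pow_left₀ (Real.exp_pos _).le hexp 2
          have hsq' : Real.exp (-(u ^ 2)) ^ 2 = Real.exp (-(2 * u ^ 2)) := by
            rw [← Real.exp_nat_mul]; congr 1; ring
          have h2u2 : 2 * u ^ 2 ≤ 8 * (n : ℝ) ^ 2 / (N : ℝ) ^ 2 := by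
            have h : u = (n : ℝ) / N * (π / 2) := by rw [hu]; ring
            have hp2 : π ^ 2 ≤ 16 := by nlinarith
            rw [h]
            calc 2 * ((n : ℝ) / N * (π / 2)) ^ 2
                = ((n : ℝ) / N) ^ 2 * (π ^ 2 / 2) := by ring
              _ ≤ ((n : ℝ) / N) ^ 2 * 8 := by
                  apply mul_le_mul_of_nonneg_left _ (by positivity); linarith
              _ = 8 * (n : ℝ) ^ 2 / (N : ℝ) ^ 2 := by rw [div_pow]; ring
          calc Real.exp (-(a n)) ≤ Real.exp (-(2 * u ^ 2)) := by
                rw [han]; exact Real.exp_le_exp.mpr (by linarith)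
            _ = Real.exp (-(u ^ 2)) ^ 2 := hsq'.symm
            _ ≤ Real.cos u ^ 2 := hsq
        · -- large angle case
          have han : a n = 2 * Real.log ((N : ℝ) / ((N : ℝ) - n)) := by
            rw [ha]; simp [hsplit]
          have hden : (0 : ℝ) < (N : ℝ) - n := by linarith
          set r : ℝ := (N : ℝ) / ((N : ℝ) - n) with hr
          have hr0 : 0 < r := by positivity
          have hexp_eq : Real.exp (-(a n)) = (((N : ℝ) - n) / N) ^ 2 := by
            rw [han]
            have : (2 : ℝ) * Real.log r = Real.log (r ^ 2) := by
              rw [Real.log_pow]; push_cast; ring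
            rw [this, Real.exp_neg, Real.exp_log (by positivity)]
            rw [hr]
            field_simp
          rw [hexp_eq]
          have hcos_ge : ((N : ℝ) - n) / N ≤ Real.cos u := by
            have hy : Real.cos u = Real.sin (π / 2 - u) := (Real.sin_pi_div_two_sub u).symm
            have hy0 : 0 ≤ π / 2 - u := by linarith
            have hy2 : π / 2 - u ≤ π / 2 := by linarith
            have := Real.mul_le_sin hy0 hy2
            rw [hy]
            refine le_trans (le_of_eq ?_) this
            rw [hu]
            field_simp
          have : (((N : ℝ) - n) / N) ^ 2 ≤ Real.cos u ^ 2 :=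
            pow_le_pow_left₀ (by positivity) hcos_ge 2
          exact this
      linarith [main]
    have hM0 : (0 : ℝ) < M := by exact_mod_cast hM
    have hsum : ∑ n ∈ Finset.Icc 1 M, a n ≤ 24 * (M : ℝ) ^ 3 / (N : ℝ) ^ 2 := by
      rw [← Finset.sum_filter_add_sum_filter_not (Finset.Icc 1 M) (fun n => 2 * n ≤ N)]
      have hS1 : ∑ n ∈ (Finset.Icc 1 M).filter (fun n => 2 * n ≤ N), a n
          ≤ 8 * (M : ℝ) ^ 3 / (N : ℝ) ^ 2 := by
        have heq : ∑ n ∈ (Finset.Icc 1 M).filter (fun n => 2 * n ≤ N), a n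
            = ∑ n ∈ (Finset.Icc 1 M).filter (fun n => 2 * n ≤ N),
                8 * (n : ℝ) ^ 2 / (N : ℝ) ^ 2 := by
          apply Finset.sum_congr rfl
          intro n hn
          rw [Finset.mem_filter] at hn
          rw [ha]; simp [hn.2]
        rw [heq]
        calc ∑ n ∈ (Finset.Icc 1 M).filter (fun n => 2 * n ≤ N),
                8 * (n : ℝ) ^ 2 / (N : ℝ) ^ 2
            ≤ ∑ n ∈ Finset.Icc 1 M, 8 * (n : ℝ) ^ 2 / (N : ℝ) ^ 2 :=
              Finset.sum_le_sum_of_subset_of_nonneg (Finset.filter_subset _ _)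
                (fun n _ _ => by positivity)
          _ ≤ ∑ n ∈ Finset.Icc 1 M, 8 * (M : ℝ) ^ 2 / (N : ℝ) ^ 2 := by
              apply Finset.sum_le_sum
              intro n hn
              rw [Finset.mem_Icc] at hn
              have : (n : ℝ) ≤ M := by exact_mod_cast hn.2
              gcongr
          _ = (M : ℝ) * (8 * (M : ℝ) ^ 2 / (N : ℝ) ^ 2) := by
              rw [Finset.sum_const, Nat.card_Icc]
              have : M + 1 - 1 = M := by omega
              rw [this, nsmul_eq_mul]
          _ = 8 * (M : ℝ) ^ 3 / (N : ℝ) ^ 2 := by ring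
      have hS2 : ∑ n ∈ (Finset.Icc 1 M).filter (fun n => ¬2 * n ≤ N), a n
          ≤ 16 * (M : ℝ) ^ 3 / (N : ℝ) ^ 2 := by
        set B := (Finset.Icc 1 M).filter (fun n => ¬2 * n ≤ N) with hB
        rcases B.eq_empty_or_nonempty with hBe | hBne
        · rw [hBe, Finset.sum_empty]; positivity
        · obtain ⟨n₀, hn₀⟩ := hBne
          have h2M : N < 2 * M := by
            rw [hB, Finset.mem_filter, Finset.mem_Icc] at hn₀; omega
          have hmem : ∀ n ∈ B, 1 ≤ n ∧ n ≤ M := by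
            intro n hn
            rw [hB, Finset.mem_filter, Finset.mem_Icc] at hn
            exact hn.1
          have heq : ∑ n ∈ B, a n
              = 2 * ∑ n ∈ B, Real.log ((N : ℝ) / ((N - n : ℕ) : ℝ)) := by
            rw [Finset.mul_sum]
            apply Finset.sum_congr rfl
            intro n hn
            obtain ⟨h1, h2⟩ := hmem n hn
            have hnsplit : ¬2 * n ≤ N := by
              rw [hB, Finset.mem_filter] at hn; exact hn.2
            have hnN : n < N := lt_of_le_of_lt h2 hMN
            have hcast : ((N - n : ℕ) : ℝ) = (N : ℝ) - n := by
              push_cast [Nat.cast_sub hnN.le]; ring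
            rw [ha]; simp only [hnsplit, if_false, hcast]
          rw [heq]
          have hsub : ∑ n ∈ B, Real.log ((N : ℝ) / ((N - n : ℕ) : ℝ)) ≤ N := by
            have hinj : ∀ x ∈ B, ∀ y ∈ B, N - x = N - y → x = y := by
              intro x hx y hy hxy
              obtain ⟨_, hx2⟩ := hmem x hx
              obtain ⟨_, hy2⟩ := hmem y hy
              omega
            have himage : ∑ n ∈ B, Real.log ((N : ℝ) / ((N - n : ℕ) : ℝ))
                = ∑ k ∈ B.image (fun n => N - n), Real.log ((N : ℝ) / (k : ℝ)) :=
              (Finset.sum_image (g := fun n => N - n) (f := fun k : ℕ => Real.log ((N : ℝ) / (k : ℝ))) hinj).symm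
            rw [himage]
            refine le_trans ?_ (aux_sum_log_le N hN1)
            apply Finset.sum_le_sum_of_subset_of_nonneg
            · intro k hk
              rw [Finset.mem_image] at hk
              obtain ⟨n, hn, rfl⟩ := hk
              obtain ⟨h1, h2⟩ := hmem n hn
              rw [Finset.mem_Icc]
              omega
            · intro k hk _
              rw [Finset.mem_Icc] at hk
              have hk0 : (0 : ℝ) < k := by exact_mod_cast hk.1
              have hkN : (k : ℝ) ≤ N := by exact_mod_cast hk.2
              apply Real.log_nonneg
              rw [le_div_iff₀ hk0]; linarith
          have hNle : (N : ℝ) < 2 * M := by exact_mod_cast h2M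
          have h3 : (N : ℝ) ^ 3 ≤ (2 * (M : ℝ)) ^ 3 :=
            pow_le_pow_left₀ hN0.le hNle.le 3
          have : (2 : ℝ) * N ≤ 16 * (M : ℝ) ^ 3 / (N : ℝ) ^ 2 := by
            rw [le_div_iff₀ (by positivity)]
            nlinarith
          linarith
      have e1 : (8 : ℝ) * (M : ℝ) ^ 3 / (N : ℝ) ^ 2 + 16 * (M : ℝ) ^ 3 / (N : ℝ) ^ 2
          = 24 * (M : ℝ) ^ 3 / (N : ℝ) ^ 2 := by ring
      linarith
    calc (2 : ℝ) ^ M * Real.exp (-24 * (M : ℝ) ^ 3 / (N : ℝ) ^ 2)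
        ≤ (2 : ℝ) ^ M * Real.exp (-(∑ n ∈ Finset.Icc 1 M, a n)) := by
          apply mul_le_mul_of_nonneg_left _ (by positivity)
          apply Real.exp_le_exp.mpr
          have h : -24 * (M : ℝ) ^ 3 / (N : ℝ) ^ 2
              = -(24 * (M : ℝ) ^ 3 / (N : ℝ) ^ 2) := by ring
          rw [h]
          linarith
      _ = ∏ n ∈ Finset.Icc 1 M, (2 * Real.exp (-(a n))) := by
          rw [Finset.prod_mul_distrib, Finset.prod_const, Nat.card_Icc,
            ← Real.exp_sum]
          have h1 : M + 1 - 1 = M := by omega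
          rw [h1]
          congr 1
          rw [← Finset.sum_neg_distrib]
      _ ≤ ∏ n ∈ Finset.Icc 1 M, (1 + Real.cos ((n : ℝ) * π / N)) :=
          Finset.prod_le_prod (fun n _ => by positivity) key
end
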